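/- arXiv:1409.3418 — 9 statements merged into one kernel-verified Lean document; each statement's English description precedes it below -/
import Mathlib

section
/- Let (X,d,p) be a pointed metric space, let B be a countable set of sequences of points of X, and let (ρ_n) be a scaling sequence such that limsup_{n→∞} d(b_n,p)/ρ_n < ∞ for every (b_n) ∈ B. Then there exists a strictly increasing sequence (n_k) of natural numbers such that the family B' = { (b_{n_k})_{k∈ℕ} : (b_n) ∈ B } is self-stable w.r.t. the scaling sequence (ρ_{n_k})_{k∈ℕ}. -/
open Filter Topology Set
open scoped ENNReal

/-- A scaling sequence: strictly positive reals tending to zero. -/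
def ScalingSeq (r : ℕ → ℝ) : Prop :=
  (∀ n, 0 < r n) ∧ Tendsto r atTop (𝓝 (0 : ℝ))

/-- Two sequences of points are mutually stable w.r.t. a scaling sequence. -/
def MutuallyStable {X : Type*} [MetricSpace X] (r : ℕ → ℝ) (x y : ℕ → X) : Prop :=
  ∃ L : ℝ, Tendsto (fun n => dist (x n) (y n) / r n) atTop (𝓝 L)

/-- A family of sequences is self-stable w.r.t. a scaling sequence. -/
def SelfStable {X : Type*} [MetricSpace X] (r : ℕ → ℝ) (F : Set (ℕ → X)) : Prop :=
  ∀ x ∈ F, ∀ y ∈ F, MutuallyStable r x y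

/-- A maximal self-stable family. -/
def MaxSelfStable {X : Type*} [MetricSpace X] (r : ℕ → ℝ) (F : Set (ℕ → X)) : Prop :=
  SelfStable r F ∧ ∀ G : Set (ℕ → X), SelfStable r G → F ⊆ G → G = F

/-- A sequence of reals is eventually decreasing. -/
def EvDecr (τ : ℕ → ℝ) : Prop := ∀ᶠ n in atTop, τ (n + 1) ≤ τ n

/-- A normal scaling sequence for a pointed metric space `(X, d, p)`. -/
def NormalScaling {X : Type*} [MetricSpace X] (p : X) (r : ℕ → ℝ) : Prop :=
  ScalingSeq r ∧ EvDecr r ∧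
    ∃ x : ℕ → X, Tendsto (fun n => dist (x n) p / r n) atTop (𝓝 (1 : ℝ))

/-- The set `Ẽ₀ᵈ(E)` of eventually decreasing sequences of nonzero points of `E`
tending to zero. -/
def E0d (E : Set ℝ) : Set (ℕ → ℝ) :=
  {τ | EvDecr τ ∧ (∀ n, τ n ∈ E \ {0}) ∧ Tendsto τ atTop (𝓝 (0 : ℝ))}

/-- `Ioo a b` is a connected component of the interior of `[0,∞) \ E`. -/
def IsCompExt (E : Set ℝ) (a b : ℝ) : Prop :=
  a < b ∧ Ioo a b ⊆ interior (Ici 0 \ E) ∧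
    ∀ a' b' : ℝ, a' ≤ a → b ≤ b' → Ioo a' b' ⊆ interior (Ici 0 \ E) → a' = a ∧ b' = b

/-- The set `Ĩ_E^d` of sequences of intervals. -/
def IEd (E : Set ℝ) (a b : ℕ → ℝ) : Prop :=
  (∀ n, IsCompExt E (a n) (b n)) ∧ EvDecr a ∧ Tendsto a atTop (𝓝 (0 : ℝ)) ∧
    Tendsto (fun n => (b n - a n) / b n) atTop (𝓝 (1 : ℝ))

/-- The equivalence `x ≍ y` for sequences of strictly positive numbers. -/
def Asymp (x y : ℕ → ℝ) : Prop :=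
  ∃ c₁ c₂ : ℝ, 0 < c₁ ∧ 0 < c₂ ∧ ∀ n, c₁ * x n < y n ∧ y n < c₂ * x n

/-- `E` is `τ`-strongly porous at `0`. -/
def TPorous (E : Set ℝ) (τ : ℕ → ℝ) : Prop :=
  ∃ a b : ℕ → ℝ, IEd E a b ∧ Asymp τ a

/-- `E` is completely strongly porous at `0`. -/
def CSP (E : Set ℝ) : Prop := ∀ τ ∈ E0d E, TPorous E τ

/-- The relation `⪯` (on the first components of members of `Ĩ_E^d`). -/
def Preceq (a l : ℕ → ℝ) : Prop :=
  ∃ (N₁ : ℕ) (f : ℕ → ℕ), ∀ n ≥ N₁, a n = l (f n)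

/-- `(l, m)` is a universal element of `Ĩ_E^d`. -/
def UnivElem (E : Set ℝ) (l m : ℕ → ℝ) : Prop :=
  IEd E l m ∧ ∀ a b : ℕ → ℝ, IEd E a b → Preceq a l

/-- The quantity `M(L̃) = limsup lₙ / m_{n+1}`, valued in `[0,∞]`. -/
noncomputable def MQ (l m : ℕ → ℝ) : ℝ≥0∞ :=
  Filter.limsup (fun n => ENNReal.ofReal (l n / m (n + 1))) atTop

/-- The quantity `C(τ̃)`, valued in `[0,∞]` (inf of the empty set is `∞`). -/
noncomputable def Ctau (E : Set ℝ) (τ : ℕ → ℝ) : ℝ≥0∞ :=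
  sInf {v | ∃ a b : ℕ → ℝ, IEd E a b ∧ (∀ᶠ n in atTop, τ n ≤ a n) ∧
    v = Filter.limsup (fun n => ENNReal.ofReal (a n / τ n)) atTop}

/-- The quantity `C_E`, valued in `[0,∞]`. -/
noncomputable def CE (E : Set ℝ) : ℝ≥0∞ :=
  sSup {v | ∃ τ ∈ E0d E, v = Ctau E τ}

/-- The distance set `S_p(X) = {d(x,p) : x ∈ X}`. -/
def SpSet (X : Type*) [MetricSpace X] (p : X) : Set ℝ := {t | ∃ x : X, t = dist x p}

/-- `R*_n(X,p)`: the supremum, over normal scaling sequences `r` and sequences `x` in `X`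
for which the finite limit `lim d(xₙ,p)/rₙ` exists, of this limit, in `[0,∞]`
(sup of the empty set is `0`). -/
noncomputable def RstarN (X : Type*) [MetricSpace X] (p : X) : ℝ≥0∞ :=
  sSup {v | ∃ (r : ℕ → ℝ) (x : ℕ → X) (L : ℝ), NormalScaling p r ∧
    Tendsto (fun n => dist (x n) p / r n) atTop (𝓝 L) ∧ v = ENNReal.ofReal L}

/-- `Rⁿ_*(X,p)`: the corresponding infimum over strictly positive such limits, in `[0,∞]`
(inf of the empty set is `∞`). -/
noncomputable def RlowN (X : Type*) [MetricSpace X] (p : X) : ℝ≥0∞ :=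
  sInf {v | ∃ (r : ℕ → ℝ) (x : ℕ → X) (L : ℝ), NormalScaling p r ∧
    Tendsto (fun n => dist (x n) p / r n) atTop (𝓝 L) ∧ 0 < L ∧ v = ENNReal.ofReal L}

/-- `λ(E,0,h)`: the length of the largest open subinterval of `(0,h)` containing
no point of `E`. -/
noncomputable def lamE (E : Set ℝ) (h : ℝ) : ℝ :=
  sSup {d | ∃ a b : ℝ, 0 ≤ a ∧ a ≤ b ∧ b ≤ h ∧ Ioo a b ∩ E = ∅ ∧ d = b - a}

/-- `E` is strongly porous at `0`: the right upper porosity `p⁺(E,0)` equals `1`. -/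
def StronglyPorousAtZero (E : Set ℝ) : Prop :=
  Filter.limsup (fun h => lamE E h / h) (𝓝[>] (0 : ℝ)) = 1

/-- A countable family with bounded `limsup d(bₙ,p)/ρₙ` admits a common
subsequence along which it becomes self-stable. -/
theorem stmt_1 {X : Type*} [MetricSpace X] (p : X) (B : Set (ℕ → X)) (hB : B.Countable)
    (ρ : ℕ → ℝ) (hρ : ScalingSeq ρ)
    (hbound : ∀ b ∈ B,
      Filter.limsup (fun n => ENNReal.ofReal (dist (b n) p / ρ n)) atTop < ⊤) :
    ∃ φ : ℕ → ℕ, StrictMono φ ∧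
      ∀ b ∈ B, ∀ b' ∈ B,
        MutuallyStable (fun k => ρ (φ k)) (fun k => b (φ k)) (fun k => b' (φ k)) := by
  rcases B.eq_empty_or_nonempty with hBe | hBne
  · exact ⟨id, strictMono_id, by simp [hBe]⟩
  obtain ⟨e, he⟩ := Set.Countable.exists_eq_range hB hBne
  set g : ℕ → (ℕ × ℕ) → ℝ≥0∞ :=
    fun n ij => ENNReal.ofReal (dist (e ij.1 n) (e ij.2 n) / ρ n) with hg
  obtain ⟨a, φ, hφ, hconv⟩ := CompactSpace.tendsto_subseq g
  refine ⟨φ, hφ, ?_⟩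
  -- pointwise convergence
  have hpw : ∀ i j : ℕ, Tendsto (fun k => g (φ k) (i, j)) atTop (𝓝 (a (i, j))) := by
    intro i j
    exact (tendsto_pi_nhds.1 hconv) (i, j)
  -- finite limits
  have hfin : ∀ i j : ℕ, a (i, j) ≠ ⊤ := by
    intro i j
    have hi : e i ∈ B := by rw [he]; exact mem_range_self i
    have hj : e j ∈ B := by rw [he]; exact mem_range_self j
    have hle : ∀ n, g n (i, j) ≤
        ENNReal.ofReal (dist (e i n) p / ρ n) + ENNReal.ofReal (dist (e j n) p / ρ n) := by
      intro n
      rw [hg]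
      have h1 : dist (e i n) (e j n) / ρ n ≤ dist (e i n) p / ρ n + dist (e j n) p / ρ n := by
        rw [← add_div]
        exact div_le_div_of_nonneg_right (dist_triangle_right _ _ _) (hρ.1 n).le |>.trans_eq rfl
      calc ENNReal.ofReal (dist (e i n) (e j n) / ρ n)
          ≤ ENNReal.ofReal (dist (e i n) p / ρ n + dist (e j n) p / ρ n) :=
            ENNReal.ofReal_le_ofReal h1
        _ ≤ _ := ENNReal.ofReal_add_le
    set Mi := Filter.limsup (fun n => ENNReal.ofReal (dist (e i n) p / ρ n)) atTop with hMi
    set Mj := Filter.limsup (fun n => ENNReal.ofReal (dist (e j n) p / ρ n)) atTop with hMj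
    have hMi' : Mi < ⊤ := hbound _ hi
    have hMj' : Mj < ⊤ := hbound _ hj
    have hevi : ∀ᶠ n in atTop, ENNReal.ofReal (dist (e i n) p / ρ n) < Mi + 1 :=
      Filter.eventually_lt_of_limsup_lt (ENNReal.lt_add_right hMi'.ne one_ne_zero)
    have hevj : ∀ᶠ n in atTop, ENNReal.ofReal (dist (e j n) p / ρ n) < Mj + 1 :=
      Filter.eventually_lt_of_limsup_lt (ENNReal.lt_add_right hMj'.ne one_ne_zero)
    have hev : ∀ᶠ n in atTop, g n (i, j) ≤ (Mi + 1) + (Mj + 1) := by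
      filter_upwards [hevi, hevj] with n h1 h2
      exact (hle n).trans (add_le_add h1.le h2.le)
    have hev' : ∀ᶠ k in atTop, g (φ k) (i, j) ≤ (Mi + 1) + (Mj + 1) :=
      (hφ.tendsto_atTop).eventually hev
    have hfin' : a (i, j) ≤ (Mi + 1) + (Mj + 1) := le_of_tendsto (hpw i j) hev'
    refine (hfin'.trans_lt ?_).ne
    exact ENNReal.add_lt_top.2 ⟨ENNReal.add_lt_top.2 ⟨hMi', ENNReal.one_lt_top⟩,
      ENNReal.add_lt_top.2 ⟨hMj', ENNReal.one_lt_top⟩⟩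
  intro b hb b' hb'
  rw [he] at hb hb'
  obtain ⟨i, rfl⟩ := hb
  obtain ⟨j, rfl⟩ := hb'
  refine ⟨(a (i, j)).toReal, ?_⟩
  have h1 : Tendsto (fun k => (g (φ k) (i, j)).toReal) atTop (𝓝 (a (i, j)).toReal) :=
    (ENNReal.tendsto_toReal (hfin i j)).comp (hpw i j)
  convert h1 using 2 with k
  rw [hg]
  simp only
  rw [ENNReal.toReal_ofReal (div_nonneg dist_nonneg (hρ.1 (φ k)).le)]
end

section
/- Let E ⊆ [0,∞), let (γ_n) ∈ Ẽ_0^d(E), let ((a_n,b_n)) ∈ Ĩ_E^d, and write ã = (a_n). Then (γ_n) ≍ (a_n) holds if and only if limsup_{n→∞} a_n/γ_n < ∞ and γ_n ≤ a_n for all sufficiently large n. -/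
open Filter Topology Set
open scoped ENNReal

/-- For `γ ∈ Ẽ₀ᵈ(E)` and `((aₙ,bₙ)) ∈ Ĩ_Eᵈ`, `γ ≍ a` holds iff
`limsup aₙ/γₙ < ∞` and `γₙ ≤ aₙ` for sufficiently large `n`. -/
theorem stmt_2 (E : Set ℝ) (hE : E ⊆ Ici 0) (γ : ℕ → ℝ) (hγ : γ ∈ E0d E)
    (a b : ℕ → ℝ) (hab : IEd E a b) :
    Asymp γ a ↔
      (Filter.limsup (fun n => ENNReal.ofReal (a n / γ n)) atTop < ⊤ ∧
        ∀ᶠ n in atTop, γ n ≤ a n) := by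
  obtain ⟨hcomp, hadec, ha0, hba⟩ := hab
  obtain ⟨hγdec, hγmem, hγ0⟩ := hγ
  have hγpos : ∀ n, 0 < γ n := fun n => by
    have h := hγmem n
    exact lt_of_le_of_ne (hE h.1) (Ne.symm h.2)
  have hIoo : ∀ n, Ioo (a n) (b n) ⊆ Ici 0 \ E := fun n =>
    (hcomp n).2.1.trans interior_subset
  have hanneg : ∀ n, 0 ≤ a n := fun n => by
    have h1 : a n ∈ closure (Ioo (a n) (b n)) := by
      rw [closure_Ioo (hcomp n).1.ne]
      exact ⟨le_refl _, (hcomp n).1.le⟩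
    have h2 := closure_mono ((hIoo n).trans diff_subset) h1
    rwa [closure_Ici] at h2
  have hbpos : ∀ n, 0 < b n := fun n => lt_of_le_of_lt (hanneg n) (hcomp n).1
  have hapos : ∀ n, 0 < a n := fun n => by
    rcases (hanneg n).lt_or_eq with h | h
    · exact h
    · exfalso
      obtain ⟨m, hm⟩ := (hγ0.eventually_lt_const (hbpos n)).exists
      have hmem : γ m ∈ Ioo (a n) (b n) := ⟨h ▸ hγpos m, hm⟩
      exact (hIoo n hmem).2 (hγmem m).1
  have hγnotIoo : ∀ n, γ n ∉ Ioo (a n) (b n) := fun n h => (hIoo n h).2 (hγmem n).1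
  have h_ab_ratio : Tendsto (fun n => a n / b n) atTop (𝓝 0) := by
    have heq : (fun n => a n / b n) = fun n => 1 - (b n - a n) / b n := by
      funext n
      have hb := (hbpos n).ne'
      field_simp
      ring
    rw [heq]
    have := (tendsto_const_nhds (x := (1:ℝ)) (f := atTop)).sub hba
    simpa using this
  constructor
  · rintro ⟨c₁, c₂, hc₁, hc₂, hc⟩
    constructor
    · have hle : ∀ n, ENNReal.ofReal (a n / γ n) ≤ ENNReal.ofReal c₂ := fun n => by
        apply ENNReal.ofReal_le_ofReal
        exact (div_le_iff₀ (hγpos n)).mpr (hc n).2.le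
      calc Filter.limsup (fun n => ENNReal.ofReal (a n / γ n)) atTop
          ≤ ENNReal.ofReal c₂ := limsup_le_of_le (by isBoundedDefault) (Eventually.of_forall hle)
        _ < ⊤ := ENNReal.ofReal_lt_top
    · filter_upwards [h_ab_ratio.eventually_lt_const hc₁] with n hn
      by_contra hgt
      push_neg at hgt
      have hbγ : b n ≤ γ n := by
        by_contra hb
        push_neg at hb
        exact hγnotIoo n ⟨hgt, hb⟩
      have h1 : c₁ * γ n < a n := (hc n).1
      have h2 : c₁ < a n / b n := by
        rw [lt_div_iff₀ (hbpos n)]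
        nlinarith
      linarith
  · rintro ⟨hsup, hev⟩
    set S := Filter.limsup (fun n => ENNReal.ofReal (a n / γ n)) atTop with hS
    have hC : S + 1 < ⊤ := by
      rw [ENNReal.add_lt_top]
      exact ⟨hsup, ENNReal.one_lt_top⟩
    have hlt : ∀ᶠ n in atTop, ENNReal.ofReal (a n / γ n) < S + 1 :=
      eventually_lt_of_limsup_lt (ENNReal.lt_add_right hsup.ne one_ne_zero)
    set C := (S + 1).toReal with hCdef
    have hreal : ∀ᶠ n in atTop, a n / γ n ≤ C := by
      filter_upwards [hlt] with n hn
      have h1 := ENNReal.toReal_mono hC.ne hn.le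
      rwa [ENNReal.toReal_ofReal (div_nonneg (hapos n).le (hγpos n).le)] at h1
    obtain ⟨N, hN⟩ := eventually_atTop.mp (hev.and hreal)
    set q : ℕ → ℝ := fun n => a n / γ n with hq
    have hqpos : ∀ n, 0 < q n := fun n => div_pos (hapos n) (hγpos n)
    have hC0 : 0 ≤ C := ENNReal.toReal_nonneg
    have hne : (Finset.range (N + 1)).Nonempty := ⟨0, by simp⟩
    refine ⟨min 1 ((Finset.range (N + 1)).inf' hne q) / 2,
      max C ((Finset.range (N + 1)).sup' hne q) + 1, ?_, ?_, ?_⟩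
    · have hinf : 0 < (Finset.range (N + 1)).inf' hne q :=
        (Finset.lt_inf'_iff hne).mpr fun m _ => hqpos m
      have : 0 < min 1 ((Finset.range (N + 1)).inf' hne q) := lt_min one_pos hinf
      linarith
    · have := le_max_left C ((Finset.range (N + 1)).sup' hne q)
      linarith
    · intro n
      rcases le_or_gt n N with h | h
      · have hmem : n ∈ Finset.range (N + 1) := Finset.mem_range.mpr (by omega)
        constructor
        · have h1 : (Finset.range (N + 1)).inf' hne q ≤ q n :=
            Finset.inf'_le q hmem
          have h2 : min 1 ((Finset.range (N + 1)).inf' hne q) / 2 < q n := by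
            have := min_le_right 1 ((Finset.range (N + 1)).inf' hne q)
            have := hqpos n
            linarith
          rwa [lt_div_iff₀ (hγpos n)] at h2
        · have h1 : q n ≤ (Finset.range (N + 1)).sup' hne q :=
            Finset.le_sup' q hmem
          have h2 : q n < max C ((Finset.range (N + 1)).sup' hne q) + 1 := by
            have := le_max_right C ((Finset.range (N + 1)).sup' hne q)
            linarith
          rwa [div_lt_iff₀ (hγpos n)] at h2
      · obtain ⟨hγa, hqC⟩ := hN n h.le
        constructor
        · have h1 : min 1 ((Finset.range (N + 1)).inf' hne q) / 2 ≤ 1 / 2 := by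
            have := min_le_left 1 ((Finset.range (N + 1)).inf' hne q)
            linarith
          nlinarith [hγpos n]
        · have h1 : q n < max C ((Finset.range (N + 1)).sup' hne q) + 1 := by
            have := le_max_left C ((Finset.range (N + 1)).sup' hne q)
            linarith
          rwa [div_lt_iff₀ (hγpos n)] at h1
end

section
/- Let E ⊆ [0,∞) be strongly porous at 0 and let 0 be an accumulation point of E. Then E is completely strongly porous at 0 if and only if there exists a universal element L̃ of Ĩ_E^d with M(L̃) < ∞. -/
open Filter Topology Set
open scoped ENNReal

/- ### Auxiliary lemmas ### -/

section Basics

variable {E : Set ℝ}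

lemma isCompExt_pos (hE : E ⊆ Ici 0) (hacc : AccPt (0 : ℝ) (Filter.principal E))
    {a b : ℝ} (h : IsCompExt E a b) : 0 < a := by
  obtain ⟨hab, hsub, _⟩ := h
  have ha0 : 0 ≤ a := by
    by_contra hneg
    push_neg at hneg
    have hac : a < min b 0 := lt_min hab hneg
    have hx : (a + min b 0) / 2 ∈ Ioo a b := by
      constructor
      · linarith
      · have := min_le_left b 0; linarith
    have := interior_subset (hsub hx)
    have hx0 : (a + min b 0) / 2 < 0 := by have := min_le_right b 0; linarith
    exact absurd this.1 (by simpa using not_le.2 hx0)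
  rcases ha0.lt_or_eq with h0 | h0
  · exact h0
  · exfalso
    rw [accPt_iff_nhds] at hacc
    obtain ⟨y, ⟨hyb, hyE⟩, hy0⟩ := hacc (Metric.ball 0 b) (Metric.ball_mem_nhds _ (h0 ▸ hab))
    have hy_pos : 0 < y := (hE hyE).lt_of_ne' hy0
    have hyb' : y < b := by
      rw [Metric.mem_ball, Real.dist_eq, sub_zero] at hyb
      exact (abs_lt.1 hyb).2
    have : y ∈ Ioo a b := ⟨h0 ▸ hy_pos, hyb'⟩
    exact (interior_subset (hsub this)).2 hyE

lemma isCompExt_left_notMem {a b : ℝ} (h : IsCompExt E a b) :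
    a ∉ interior (Ici 0 \ E) := by
  intro haU
  obtain ⟨hab, hsub, hmax⟩ := h
  obtain ⟨ε, hε, hball⟩ := Metric.isOpen_iff.1 isOpen_interior a haU
  have hsub2 : Ioo (a - ε) b ⊆ interior (Ici 0 \ E) := by
    intro x hx
    rcases lt_or_ge x (a + ε) with hlt | hge
    · apply hball
      rw [Metric.mem_ball, Real.dist_eq, abs_lt]
      constructor <;> [linarith [hx.1]; linarith]
    · exact hsub ⟨by linarith, hx.2⟩
  have := (hmax (a - ε) b (by linarith) le_rfl hsub2).1
  linarith

lemma isCompExt_right_notMem {a b : ℝ} (h : IsCompExt E a b) :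
    b ∉ interior (Ici 0 \ E) := by
  intro hbU
  obtain ⟨hab, hsub, hmax⟩ := h
  obtain ⟨ε, hε, hball⟩ := Metric.isOpen_iff.1 isOpen_interior b hbU
  have hsub2 : Ioo a (b + ε) ⊆ interior (Ici 0 \ E) := by
    intro x hx
    rcases lt_or_ge (b - ε) x with hlt | hge
    · apply hball
      rw [Metric.mem_ball, Real.dist_eq, abs_lt]
      constructor <;> [linarith; linarith [hx.2]]
    · exact hsub ⟨hx.1, by linarith⟩
  have := (hmax a (b + ε) le_rfl (by linarith) hsub2).2
  linarith

lemma mem_closure_of_not_interior {x : ℝ} (hx : 0 < x)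
    (hU : x ∉ interior (Ici 0 \ E)) : x ∈ closure E := by
  rw [Metric.mem_closure_iff]
  intro ε hε
  by_contra hcon
  push_neg at hcon
  apply hU
  have hball : Metric.ball x (min ε x) ⊆ Ici 0 \ E := by
    intro y hy
    rw [Metric.mem_ball, Real.dist_eq, abs_lt] at hy
    have h1 : 0 ≤ y := by have := min_le_right ε x; linarith [hy.1]
    refine ⟨h1, fun hyE => ?_⟩
    have hd : dist x y < ε := by
      rw [Real.dist_eq, abs_lt]
      have := min_le_left ε x
      constructor <;> [linarith [hy.2]; linarith [hy.1]]
    exact absurd (hcon y hyE) (not_le.2 hd)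
  exact interior_maximal hball Metric.isOpen_ball (Metric.mem_ball_self (lt_min hε hx))

lemma isCompExt_disjoint {a b a' b' : ℝ} (h1 : IsCompExt E a b)
    (h2 : IsCompExt E a' b') (hlt : a' < a) : b' ≤ a := by
  by_contra hcon
  push_neg at hcon
  have hsub : Ioo a' (max b b') ⊆ interior (Ici 0 \ E) := by
    intro x hx
    rcases lt_or_ge x b' with hxb | hxb
    · exact h2.2.1 ⟨hx.1, hxb⟩
    · refine h1.2.1 ⟨lt_of_lt_of_le hcon hxb, ?_⟩
      rcases le_total b' b with hbb | hbb
      · simpa [max_eq_left hbb] using hx.2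
      · have hxb' : x < b' := by simpa [max_eq_right hbb] using hx.2
        linarith
  have := (h1.2.2 a' (max b b') hlt.le (le_max_left _ _) hsub).1
  linarith

lemma IEd.ratio_tendsto_zero {l m : ℕ → ℝ} (hE : E ⊆ Ici 0)
    (hacc : AccPt (0 : ℝ) (Filter.principal E)) (h : IEd E l m) :
    Tendsto (fun n => l n / m n) atTop (𝓝 (0 : ℝ)) := by
  have hm : ∀ n, m n ≠ 0 := fun n =>
    (lt_trans (isCompExt_pos hE hacc (h.1 n)) (h.1 n).1).ne'
  have heq : (fun n => l n / m n) = fun n => 1 - (m n - l n) / m n := by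
    funext n
    rw [eq_sub_iff_add_eq, ← add_div, show l n + (m n - l n) = m n by ring,
      div_self (hm n)]
  rw [heq]
  have h1 : Tendsto (fun n => 1 - (m n - l n) / m n) atTop (𝓝 (1 - 1)) :=
    (tendsto_const_nhds (x := (1:ℝ)) (f := (atTop : Filter ℕ))).sub h.2.2.2
  simpa using h1

end Basics
section Helpers

lemma mono_of_evdecr {l : ℕ → ℝ} {N₀ : ℕ} (h : ∀ n ≥ N₀, l (n + 1) ≤ l n) :
    ∀ i j, N₀ ≤ i → i ≤ j → l j ≤ l i := by
  intro i j hNi hij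
  induction j, hij using Nat.le_induction with
  | base => exact le_rfl
  | succ k hk ih => exact le_trans (h k (le_trans hNi hk)) ih

lemma asymp_of_eventually {τ a : ℕ → ℝ} (hτ : ∀ n, 0 < τ n) (ha : ∀ n, 0 < a n)
    (C : ℝ) (h : ∀ᶠ n in atTop, 1 / 2 * τ n < a n ∧ a n < C * τ n) : Asymp τ a := by
  obtain ⟨N, hN⟩ := eventually_atTop.1 h
  classical
  set c₁ : ℝ := min (1 / 2) ((Finset.range (N + 1)).inf' (by simp) fun i => a i / (2 * τ i))
    with hc₁
  set c₂ : ℝ := max C ((Finset.range (N + 1)).sup' (by simp) fun i => 2 * a i / τ i) with hc₂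
  have hc₁pos : 0 < c₁ := by
    apply lt_min (by norm_num)
    rw [Finset.lt_inf'_iff]
    intro i _
    have := ha i; have := hτ i; positivity
  have hc₂big : ∀ i ∈ Finset.range (N + 1), 2 * a i / τ i ≤ c₂ := fun i hi =>
    le_trans (Finset.le_sup' (fun i => 2 * a i / τ i) hi) (le_max_right _ _)
  have hc₂pos : 0 < c₂ := lt_of_lt_of_le (by have := hτ 0; have := ha 0; positivity)
    (hc₂big 0 (by simp))
  refine ⟨c₁, c₂, hc₁pos, hc₂pos, fun n => ?_⟩
  rcases lt_or_ge n (N + 1) with hn | hn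
  · have hmem : n ∈ Finset.range (N + 1) := Finset.mem_range.2 hn
    constructor
    · have h1 : c₁ ≤ a n / (2 * τ n) :=
        le_trans (min_le_right _ _) (Finset.inf'_le _ hmem)
      have h2 : c₁ * τ n ≤ a n / (2 * τ n) * τ n :=
        mul_le_mul_of_nonneg_right h1 (hτ n).le
      have h3 : a n / (2 * τ n) * τ n = a n / 2 := by
        rw [div_mul_eq_mul_div, mul_comm (2:ℝ) (τ n), ← div_div,
          mul_div_assoc, div_self (hτ n).ne', mul_one]
      rw [h3] at h2
      linarith [ha n]
    · have h1 : 2 * a n / τ n ≤ c₂ := hc₂big n hmem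
      have h2 : 2 * a n / τ n * τ n ≤ c₂ * τ n := mul_le_mul_of_nonneg_right h1 (hτ n).le
      have h3 : 2 * a n / τ n * τ n = 2 * a n :=
        div_mul_cancel₀ _ (hτ n).ne'
      rw [h3] at h2
      linarith [ha n]
  · obtain ⟨hl, hr⟩ := hN n (by omega)
    constructor
    · exact lt_of_le_of_lt (mul_le_mul_of_nonneg_right (min_le_left _ _) (hτ n).le) hl
    · exact lt_of_lt_of_le hr (mul_le_mul_of_nonneg_right (le_max_left _ _) (hτ n).le)

end Helpers
section Net

open scoped Classical in
noncomputable def netSeq (E : Set ℝ) (estar : ℝ) : ℕ → ℝ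
  | 0 => estar
  | (k + 1) =>
    if h : ∃ e, e ∈ E ∧ 0 < e ∧ e ≤ netSeq E estar k / 2 ∧
        ∀ e' ∈ E, 0 < e' → e' ≤ netSeq E estar k / 2 → e' ≤ 2 * e
    then h.choose else 1

variable {E : Set ℝ}

lemma exists_net_step (hE : E ⊆ Ici 0) (hacc : AccPt (0 : ℝ) (Filter.principal E))
    {c : ℝ} (hc : 0 < c) :
    ∃ e, e ∈ E ∧ 0 < e ∧ e ≤ c ∧ ∀ e' ∈ E, 0 < e' → e' ≤ c → e' ≤ 2 * e := by
  have hne : ∃ z, z ∈ E ∩ Ioc 0 c := by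
    rw [accPt_iff_nhds] at hacc
    obtain ⟨y, ⟨hyb, hyE⟩, hy0⟩ := hacc (Metric.ball 0 c) (Metric.ball_mem_nhds _ hc)
    have hpos : 0 < y := (hE hyE).lt_of_ne' hy0
    have hyc : y < c := by
      rw [Metric.mem_ball, Real.dist_eq, sub_zero] at hyb
      exact (abs_lt.1 hyb).2
    exact ⟨y, hyE, hpos, hyc.le⟩
  obtain ⟨z₀, hz₀⟩ := hne
  have hbdd : BddAbove (E ∩ Ioc 0 c) := ⟨c, fun z hz => hz.2.2⟩
  have hsup_pos : 0 < sSup (E ∩ Ioc 0 c) := lt_of_lt_of_le hz₀.2.1 (le_csSup hbdd hz₀)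
  have hex : ∃ e ∈ E ∩ Ioc 0 c, sSup (E ∩ Ioc 0 c) / 2 < e := by
    by_contra hcon
    push_neg at hcon
    have := csSup_le ⟨z₀, hz₀⟩ hcon
    linarith
  obtain ⟨e, heS, hse⟩ := hex
  refine ⟨e, heS.1, heS.2.1, heS.2.2, fun e' he' hpos hle => ?_⟩
  have := le_csSup hbdd (⟨he', hpos, hle⟩ : e' ∈ E ∩ Ioc 0 c)
  linarith

lemma netSeq_spec (hE : E ⊆ Ici 0) (hacc : AccPt (0 : ℝ) (Filter.principal E))
    {estar : ℝ} (hesE : estar ∈ E) (hes : 0 < estar) :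
    ∀ k, (netSeq E estar k ∈ E ∧ 0 < netSeq E estar k) ∧
      netSeq E estar (k + 1) ≤ netSeq E estar k / 2 ∧
      (∀ e' ∈ E, 0 < e' → e' ≤ netSeq E estar k / 2 → e' ≤ 2 * netSeq E estar (k + 1)) := by
  have key : ∀ k, netSeq E estar k ∈ E ∧ 0 < netSeq E estar k := by
    intro k
    induction k with
    | zero => exact ⟨hesE, hes⟩
    | succ n ih =>
      have h : ∃ e, e ∈ E ∧ 0 < e ∧ e ≤ netSeq E estar n / 2 ∧
          ∀ e' ∈ E, 0 < e' → e' ≤ netSeq E estar n / 2 → e' ≤ 2 * e :=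
        exists_net_step hE hacc (half_pos ih.2)
      have heq : netSeq E estar (n + 1) = h.choose := by
        rw [netSeq, dif_pos h]
      rw [heq]
      exact ⟨h.choose_spec.1, h.choose_spec.2.1⟩
  intro k
  refine ⟨key k, ?_, ?_⟩ <;>
  · have h : ∃ e, e ∈ E ∧ 0 < e ∧ e ≤ netSeq E estar k / 2 ∧
        ∀ e' ∈ E, 0 < e' → e' ≤ netSeq E estar k / 2 → e' ≤ 2 * e :=
      exists_net_step hE hacc (half_pos (key k).2)
    have heq : netSeq E estar (k + 1) = h.choose := by
      rw [netSeq, dif_pos h]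
    rw [heq]
    first
      | exact h.choose_spec.2.2.1
      | exact h.choose_spec.2.2.2

end Net
section Reverse

variable {E : Set ℝ}

lemma reverse_dir (hE : E ⊆ Ici 0) (hacc : AccPt (0 : ℝ) (Filter.principal E))
    {l m : ℕ → ℝ} (hIEd : IEd E l m) (hM : MQ l m < ⊤) : CSP E := by
  intro τ hτmem'
  obtain ⟨hτdec, hτmem, hτ0⟩ := hτmem'
  have hτpos : ∀ n, 0 < τ n := fun n =>
    (hE (hτmem n).1).lt_of_ne (fun h => (hτmem n).2 (by simp [← h]))
  have hlpos : ∀ n, 0 < l n := fun n => isCompExt_pos hE hacc (hIEd.1 n)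
  have hmpos : ∀ n, 0 < m n := fun n => lt_trans (hlpos n) (hIEd.1 n).1
  set K : ℝ := (MQ l m).toReal + 1 with hK
  have hKpos : 0 < K := by
    have := ENNReal.toReal_nonneg (a := MQ l m); linarith
  have hMK : MQ l m < ENNReal.ofReal K := by
    conv_lhs => rw [← ENNReal.ofReal_toReal hM.ne]
    rw [ENNReal.ofReal_lt_ofReal_iff hKpos]
    simp [hK]
  have hev : ∀ᶠ n in atTop, l n / m (n + 1) < K := by
    rw [MQ] at hMK
    have h2 := Filter.eventually_lt_of_limsup_lt hMK
    exact h2.mono fun n hn => (ENNReal.ofReal_lt_ofReal_iff hKpos).1 hn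
  obtain ⟨Na, hNa⟩ := eventually_atTop.1 hIEd.2.1
  obtain ⟨Nb, hNb⟩ := eventually_atTop.1 hev
  set N₀ := max Na Nb with hN₀
  have hmono := mono_of_evdecr (l := l) (N₀ := N₀)
    (fun n hn => hNa n (le_trans (le_max_left _ _) hn))
  have hKbound : ∀ n, N₀ ≤ n → l n ≤ K * m (n + 1) := by
    intro n hn
    have := hNb n (le_trans (le_max_right _ _) hn)
    rw [div_lt_iff₀ (hmpos (n + 1))] at this
    linarith
  have hl0 := hIEd.2.2.1
  have hex : ∀ n, ∃ jj, N₀ ≤ jj ∧ l (jj + 1) < τ n := by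
    intro n
    obtain ⟨J, hJ⟩ := eventually_atTop.1 (hl0.eventually_lt_const (hτpos n))
    exact ⟨max J N₀, le_max_right _ _, hJ _ (by omega)⟩
  classical
  set j : ℕ → ℕ := fun n => Nat.find (hex n) with hjdef
  have hjspec : ∀ n, N₀ ≤ j n ∧ l (j n + 1) < τ n := fun n => Nat.find_spec (hex n)
  set a : ℕ → ℝ := fun n => l (j n) with ha
  set b : ℕ → ℝ := fun n => m (j n) with hb
  have hτle : ∀ n, τ n < l N₀ → τ n ≤ a n := by
    intro n hn
    rcases Nat.eq_or_lt_of_le (hjspec n).1 with he | hlt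
    · exact le_of_lt (by simpa [ha, ← he] using hn)
    · have h1 : N₀ ≤ j n - 1 := by omega
      have h2 : ¬ l (j n - 1 + 1) < τ n := fun hc =>
        Nat.find_min (hex n) (show j n - 1 < j n by omega) ⟨h1, hc⟩
      have h3 : j n - 1 + 1 = j n := by omega
      rw [h3] at h2
      exact not_lt.1 h2
  have hup : ∀ n, a n ≤ K * τ n := by
    intro n
    have h1 : m (j n + 1) ≤ τ n := by
      by_contra hc
      push_neg at hc
      have hmem2 : τ n ∈ Ioo (l (j n + 1)) (m (j n + 1)) := ⟨(hjspec n).2, hc⟩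
      exact (interior_subset ((hIEd.1 (j n + 1)).2.1 hmem2)).2 (hτmem n).1
    calc a n ≤ K * m (j n + 1) := hKbound _ (hjspec n).1
      _ ≤ K * τ n := mul_le_mul_of_nonneg_left h1 hKpos.le
  have hjtop : Tendsto j atTop atTop := by
    rw [tendsto_atTop]
    intro J
    set J' := max J N₀ with hJ'
    have hev2 : ∀ᶠ n in atTop, τ n < l (J' + 1) := hτ0.eventually_lt_const (hlpos (J' + 1))
    refine hev2.mono fun n hn => ?_
    by_contra hcon
    push_neg at hcon
    have hjJ : j n < J' := lt_of_lt_of_le hcon (le_max_left _ _)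
    have h4 : l (J' + 1) ≤ l (j n + 1) := hmono (j n + 1) (J' + 1) (le_trans (hjspec n).1 (Nat.le_succ _)) (by omega)
    have := (hjspec n).2
    linarith
  have hevNd : ∀ᶠ n in atTop, τ n < l N₀ := hτ0.eventually_lt_const (hlpos N₀)
  refine ⟨a, b, ⟨fun n => hIEd.1 (j n), ?_, ?_, ?_⟩, ?_⟩
  · -- EvDecr a
    filter_upwards [hτdec] with n hn
    have hjmono : j n ≤ j (n + 1) :=
      Nat.find_le ⟨(hjspec (n + 1)).1, lt_of_lt_of_le (hjspec (n + 1)).2 hn⟩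
    exact hmono (j n) (j (n + 1)) (hjspec n).1 hjmono
  · -- Tendsto a → 0
    have hKτ : Tendsto (fun n => K * τ n) atTop (𝓝 (0 : ℝ)) := by
      simpa using hτ0.const_mul K
    refine tendsto_of_tendsto_of_tendsto_of_le_of_le' tendsto_const_nhds hKτ
      (Eventually.of_forall fun n => (hlpos (j n)).le) (Eventually.of_forall hup)
  · -- ratio
    exact hIEd.2.2.2.comp hjtop
  · -- Asymp
    apply asymp_of_eventually hτpos (fun n => hlpos (j n)) (K + 1)
    filter_upwards [hevNd] with n hn
    constructor
    · have := hτle n hn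
      have := hτpos n
      linarith
    · have := hup n
      have := hτpos n
      linarith

end Reverse
section Forward

variable {E : Set ℝ}

lemma forward_dir (hE : E ⊆ Ici 0) (hacc : AccPt (0 : ℝ) (Filter.principal E))
    (hcsp : CSP E) : ∃ l m : ℕ → ℝ, UnivElem E l m ∧ MQ l m < ⊤ := by
  classical
  -- a positive element of E
  obtain ⟨estar, hesE, hespos⟩ : ∃ estar ∈ E, 0 < estar := by
    have hacc' := hacc
    rw [accPt_iff_nhds] at hacc'
    obtain ⟨y, ⟨_, hyE⟩, hy0⟩ := hacc' (Metric.ball 0 1) (Metric.ball_mem_nhds _ one_pos)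
    exact ⟨y, hyE, (hE hyE).lt_of_ne' hy0⟩
  set t : ℕ → ℝ := netSeq E estar with htdef
  have hspec := netSeq_spec hE hacc hesE hespos
  have htE : ∀ k, t k ∈ E := fun k => (hspec k).1.1
  have htpos : ∀ k, 0 < t k := fun k => (hspec k).1.2
  have hthalf : ∀ k, t (k + 1) ≤ t k / 2 := fun k => (hspec k).2.1
  have htdense : ∀ k, ∀ e' ∈ E, 0 < e' → e' ≤ t k / 2 → e' ≤ 2 * t (k + 1) :=
    fun k => (hspec k).2.2
  have htmono : ∀ i j, i ≤ j → t j ≤ t i := by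
    intro i j hij
    induction j, hij using Nat.le_induction with
    | base => exact le_rfl
    | succ k hk ih => exact le_trans (le_trans (hthalf k) (by linarith [htpos k])) ih
  have htbound : ∀ k, t k ≤ estar * (1 / 2) ^ k := by
    intro k
    induction k with
    | zero => simp [htdef, netSeq]
    | succ n ih =>
      calc t (n + 1) ≤ t n / 2 := hthalf n
        _ ≤ estar * (1 / 2) ^ n / 2 := by linarith
        _ = estar * (1 / 2) ^ (n + 1) := by ring
  have ht0 : Tendsto t atTop (𝓝 (0 : ℝ)) := by
    have hg : Tendsto (fun k => estar * (1 / 2 : ℝ) ^ k) atTop (𝓝 (0 : ℝ)) := by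
      have := tendsto_pow_atTop_nhds_zero_of_lt_one (by norm_num : (0:ℝ) ≤ 1/2)
        (by norm_num : (1/2 : ℝ) < 1)
      simpa using this.const_mul estar
    exact squeeze_zero (fun k => (htpos k).le) htbound hg
  have htE0d : t ∈ E0d E := by
    refine ⟨Eventually.of_forall fun n => le_trans (hthalf n) (by linarith [htpos n]), ?_, ht0⟩
    exact fun n => ⟨htE n, by simp [(htpos n).ne']⟩
  obtain ⟨l, m, hIEd, c₁, c₂, hc₁, hc₂, hasy⟩ := hcsp t htE0d
  have hlpos : ∀ n, 0 < l n := fun n => isCompExt_pos hE hacc (hIEd.1 n)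
  have hmpos : ∀ n, 0 < m n := fun n => lt_trans (hlpos n) (hIEd.1 n).1
  have hρ : Tendsto (fun n => l n / m n) atTop (𝓝 (0 : ℝ)) :=
    IEd.ratio_tendsto_zero hE hacc hIEd
  -- density of the net in closure E
  have hdense : ∀ x : ℝ, x ∈ closure E → 0 < x → x ≤ t 0 / 4 →
      ∃ jj, x / 4 ≤ t jj ∧ t jj ≤ 4 * x := by
    intro x hxc hx0 hxle
    obtain ⟨e, heE, hed⟩ := Metric.mem_closure_iff.1 hxc (x / 8) (by positivity)
    rw [Real.dist_eq, abs_lt] at hed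
    have he1 : 7 * x / 8 < e := by linarith [hed.1]
    have he2 : e < 9 * x / 8 := by linarith [hed.2]
    have hepos : 0 < e := by linarith
    have hex2 : ∃ k, t (k + 1) < 2 * e := by
      obtain ⟨N, hN⟩ := eventually_atTop.1 (ht0.eventually_lt_const (by positivity : (0:ℝ) < 2 * e))
      exact ⟨N, hN (N + 1) (by omega)⟩
    set k₀ := Nat.find hex2 with hk₀def
    have hk₀ : t (k₀ + 1) < 2 * e := Nat.find_spec hex2
    have hk₀ge : 2 * e ≤ t k₀ := by
      rcases Nat.eq_zero_or_pos k₀ with h0 | h0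
      · rw [h0]
        have := htpos 0
        linarith
      · have hmin := Nat.find_min hex2 (show k₀ - 1 < k₀ by omega)
        have h3 : k₀ - 1 + 1 = k₀ := by omega
        rw [h3] at hmin
        exact not_lt.1 hmin
    have hd := htdense k₀ e heE hepos (by linarith)
    exact ⟨k₀ + 1, by linarith, by linarith⟩
  -- threshold for small ratios of L
  obtain ⟨N₂, hN₂⟩ := eventually_atTop.1
    (hρ.eventually_lt_const (by positivity : (0:ℝ) < c₁ / 8))
  -- universality
  have huniv : ∀ x y : ℕ → ℝ, IEd E x y → Preceq x l := by
    intro x y hxy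
    have hxpos : ∀ n, 0 < x n := fun n => isCompExt_pos hE hacc (hxy.1 n)
    have hypos : ∀ n, 0 < y n := fun n => lt_trans (hxpos n) (hxy.1 n).1
    have hρx : Tendsto (fun n => x n / y n) atTop (𝓝 (0 : ℝ)) :=
      IEd.ratio_tendsto_zero hE hacc hxy
    have hkey : ∀ᶠ n in atTop, ∃ jj, x n = l jj := by
      have hev1 : ∀ᶠ n in atTop, x n < t 0 / 4 :=
        hxy.2.2.1.eventually_lt_const (by linarith [htpos 0])
      have hev2 : ∀ᶠ n in atTop, x n < t N₂ / 4 :=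
        hxy.2.2.1.eventually_lt_const (by linarith [htpos N₂])
      have hev3 : ∀ᶠ n in atTop, x n / y n < 1 / (8 * c₂) :=
        hρx.eventually_lt_const (by positivity)
      filter_upwards [hev1, hev2, hev3] with n h1 h2 h3
      have hclose : x n ∈ closure E :=
        mem_closure_of_not_interior (hxpos n) (isCompExt_left_notMem (hxy.1 n))
      obtain ⟨jj, hj1, hj2⟩ := hdense (x n) hclose (hxpos n) (by linarith)
      have hjN : N₂ ≤ jj := by
        by_contra hcon
        push_neg at hcon
        have := htmono jj N₂ (by omega)
        linarith
      have hasj := hasy jj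
      have hρj : l jj / m jj < c₁ / 8 := hN₂ jj hjN
      have hρj' : l jj < c₁ / 8 * m jj := by
        rw [div_lt_iff₀ (hmpos jj)] at hρj
        linarith
      rcases lt_trichotomy (l jj) (x n) with hlt | heq | hgt
      · exfalso
        have hmj : m jj ≤ x n := isCompExt_disjoint (hxy.1 n) (hIEd.1 jj) hlt
        have hlow : c₁ * (x n / 4) ≤ c₁ * t jj :=
          mul_le_mul_of_nonneg_left hj1 hc₁.le
        have hcx : 0 < c₁ * x n := mul_pos hc₁ (hxpos n)
        nlinarith [hasj.1]
      · exact ⟨jj, heq.symm⟩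
      · exfalso
        have hnotU : l jj ∉ interior (Ici 0 \ E) := isCompExt_left_notMem (hIEd.1 jj)
        have hyle : y n ≤ l jj := by
          by_contra hcon
          push_neg at hcon
          exact hnotU ((hxy.1 n).2.1 ⟨hgt, hcon⟩)
        rw [div_lt_iff₀ (hypos n), one_div] at h3
        have hmul := mul_lt_mul_of_pos_left h3 (show (0:ℝ) < 8 * c₂ by positivity)
        rw [← mul_assoc, mul_inv_cancel₀ (by positivity : (8 * c₂ : ℝ) ≠ 0), one_mul] at hmul
        have hup : l jj < c₂ * (4 * x n) :=
          lt_of_lt_of_le hasj.2 (mul_le_mul_of_nonneg_left hj2 hc₂.le)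
        have hre : c₂ * (4 * x n) = 4 * (c₂ * x n) := by ring
        have hre2 : 8 * c₂ * x n = 8 * (c₂ * x n) := by ring
        rw [hre] at hup
        rw [hre2] at hmul
        have hcx : 0 < c₂ * x n := mul_pos hc₂ (hxpos n)
        linarith
    obtain ⟨N₁, hN₁⟩ := eventually_atTop.1 hkey
    refine ⟨N₁, fun n => if h : ∃ jj, x n = l jj then h.choose else 0, fun n hn => ?_⟩
    have h := hN₁ n hn
    show x n = l (if h : ∃ jj, x n = l jj then h.choose else 0)
    rw [dif_pos h]
    exact h.choose_spec
  -- the M bound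
  have hMev : ∀ᶠ k in atTop, l k / m (k + 1) ≤ 8 * c₂ := by
    filter_upwards [eventually_ge_atTop N₂] with k hk
    by_contra hcon
    push_neg at hcon
    have hm1 : m (k + 1) < l k / (8 * c₂) := by
      rw [lt_div_iff₀ (hmpos (k + 1))] at hcon
      rw [lt_div_iff₀ (by positivity : (0:ℝ) < 8 * c₂)]
      have hcomm : 8 * c₂ * m (k + 1) = m (k + 1) * (8 * c₂) := mul_comm _ _
      linarith
    have hmclose : m (k + 1) ∈ closure E :=
      mem_closure_of_not_interior (hmpos (k + 1)) (isCompExt_right_notMem (hIEd.1 (k + 1)))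
    have hlk : l k < c₂ * t k := (hasy k).2
    have htk0 : t k ≤ t 0 := htmono 0 k (Nat.zero_le _)
    have hsmall : m (k + 1) ≤ t 0 / 4 := by
      have : l k / (8 * c₂) ≤ t k / 8 := by
        rw [div_le_div_iff₀ (by positivity) (by norm_num : (0:ℝ) < 8)]
        nlinarith
      have := htpos 0
      linarith
    obtain ⟨jj, hj1, hj2⟩ := hdense (m (k + 1)) hmclose (hmpos (k + 1)) hsmall
    have hjk : k + 1 ≤ jj := by
      by_contra hco
      push_neg at hco
      have hmono2 : t k ≤ t jj := htmono jj k (by omega)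
      have : t jj ≤ 4 * (l k / (8 * c₂)) := by linarith
      have h4 : 4 * (l k / (8 * c₂)) = l k / (2 * c₂) := by
        field_simp
        ring
      rw [h4] at this
      have h5 : l k / (2 * c₂) < t k / 2 := by
        rw [div_lt_div_iff₀ (by positivity) (by norm_num : (0:ℝ) < 2)]
        nlinarith
      linarith
    have hjle : t jj ≤ t (k + 1) := htmono (k + 1) jj hjk
    have hρk : l (k + 1) / m (k + 1) < c₁ / 8 := hN₂ (k + 1) (by omega)
    have hρk' : l (k + 1) < c₁ / 8 * m (k + 1) := by
      rw [div_lt_iff₀ (hmpos (k + 1))] at hρk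
      linarith
    have hck : c₁ * t (k + 1) < l (k + 1) := (hasy (k + 1)).1
    nlinarith
  have hMQ : MQ l m < ⊤ := by
    have hle : MQ l m ≤ ENNReal.ofReal (8 * c₂) := by
      rw [MQ]
      exact Filter.limsup_le_of_le (by isBoundedDefault)
        (hMev.mono fun k hk => ENNReal.ofReal_le_ofReal hk)
    exact lt_of_le_of_lt hle ENNReal.ofReal_lt_top
  exact ⟨l, m, ⟨hIEd, huniv⟩, hMQ⟩

end Forward

/-- Let `E ⊆ [0,∞)` be strongly porous at `0` with `0` an accumulation
point of `E`. Then `E` is completely strongly porous at `0` iff there is a universal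
element `L̃` of `Ĩ_Eᵈ` with `M(L̃) < ∞`. -/
theorem stmt_3 (E : Set ℝ) (hE : E ⊆ Ici 0) (hsp : StronglyPorousAtZero E)
    (hacc : AccPt (0 : ℝ) (Filter.principal E)) :
    CSP E ↔ ∃ l m : ℕ → ℝ, UnivElem E l m ∧ MQ l m < ⊤ := by
  constructor
  · intro hcsp
    exact forward_dir hE hacc hcsp
  · rintro ⟨l, m, hu, hM⟩
    exact reverse_dir hE hacc hu.1 hM
end

section
/- Let E ⊆ [0,∞) and let (τ_n) ∈ Ẽ_0^d(E). Then E is (τ_n)-strongly porous at 0 if and only if there exists a constant k ∈ (1,∞) such that for every K ∈ (k,∞) there exists N₁(K) ∈ ℕ with (kτ_n, Kτ_n) ∩ E = ∅ for every n ≥ N₁(K). -/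
open Filter Topology Set
open scoped ENNReal

lemma asymp_helper (τ a : ℕ → ℝ) (hτ : ∀ n, 0 < τ n) (ha : ∀ n, 0 < a n) :
    ∀ (N : ℕ) (c₁ c₂ : ℝ), 0 < c₁ → 0 < c₂ →
      (∀ n ≥ N, c₁ * τ n < a n ∧ a n < c₂ * τ n) → Asymp τ a := by
  intro N
  induction N with
  | zero => exact fun c₁ c₂ h1 h2 h => ⟨c₁, c₂, h1, h2, fun n => h n (Nat.zero_le n)⟩
  | succ N ih =>
    intro c₁ c₂ h1 h2 h
    refine ih (min c₁ (a N / (2 * τ N))) (max c₂ (2 * (a N / τ N))) ?_ ?_ ?_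
    · exact lt_min h1 (div_pos (ha N) (by linarith [hτ N]))
    · exact lt_of_lt_of_le h2 (le_max_left _ _)
    · intro n hn
      rcases eq_or_lt_of_le hn with hEq | hlt
      · subst hEq
        have hτN := hτ N
        have hq : (a N / (2 * τ N)) * τ N = a N / 2 := by
          field_simp
        constructor
        · calc min c₁ (a N / (2 * τ N)) * τ N
              ≤ (a N / (2 * τ N)) * τ N :=
                mul_le_mul_of_nonneg_right (min_le_right _ _) hτN.le
            _ = a N / 2 := hq
            _ < a N := by linarith [ha N]
        · calc a N < 2 * (a N / τ N) * τ N := by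
                rw [mul_assoc, div_mul_cancel₀ _ hτN.ne']; linarith [ha N]
            _ ≤ max c₂ (2 * (a N / τ N)) * τ N :=
                mul_le_mul_of_nonneg_right (le_max_right _ _) hτN.le
      · have h' := h n hlt
        exact ⟨lt_of_le_of_lt
            (mul_le_mul_of_nonneg_right (min_le_left _ _) (hτ n).le) h'.1,
          lt_of_lt_of_le h'.2
            (mul_le_mul_of_nonneg_right (le_max_left _ _) (hτ n).le)⟩

lemma interior_char (E : Set ℝ) : interior (Ici 0 \ E) = Ioi 0 ∩ (closure E)ᶜ := by
  rw [diff_eq, interior_inter, interior_Ici, interior_compl]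

lemma disj_closure {s : Set ℝ} {u v : ℝ} (h : Ioo u v ∩ s = ∅) :
    Ioo u v ∩ closure s = ∅ := by
  rw [eq_empty_iff_forall_notMem]
  rintro x ⟨hx, hxc⟩
  obtain ⟨y, hy1, hy2⟩ := mem_closure_iff.mp hxc (Ioo u v) isOpen_Ioo hx
  exact absurd h (by rw [eq_empty_iff_forall_notMem]; push_neg; exact ⟨y, hy1, hy2⟩)

/-- `E` is `τ`-strongly porous at `0` iff there is `k ∈ (1,∞)` such that
for all `K ∈ (k,∞)` eventually `(kτₙ, Kτₙ) ∩ E = ∅`. -/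
theorem stmt_4 (E : Set ℝ) (hE : E ⊆ Ici 0) (τ : ℕ → ℝ) (hτ : τ ∈ E0d E) :
    TPorous E τ ↔
      ∃ k : ℝ, 1 < k ∧ ∀ K : ℝ, k < K →
        ∃ N₁ : ℕ, ∀ n ≥ N₁, Ioo (k * τ n) (K * τ n) ∩ E = ∅ := by
  obtain ⟨hτdec, hτmem, hτ0⟩ := hτ
  have hτpos : ∀ n, 0 < τ n := fun n =>
    lt_of_le_of_ne (hE (hτmem n).1) (fun hh => (hτmem n).2 hh.symm)
  constructor
  · rintro ⟨a, b, ⟨hcomp, _, _, hlim⟩, c₁, c₂, hc₁, hc₂, hab⟩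
    have hapos : ∀ n, 0 < a n := fun n =>
      lt_trans (mul_pos hc₁ (hτpos n)) (hab n).1
    have hbpos : ∀ n, 0 < b n := fun n => (hapos n).trans (hcomp n).1
    have hdiv : Tendsto (fun n => a n / b n) atTop (𝓝 0) := by
      have h1 : Tendsto (fun n => 1 - (b n - a n) / b n) atTop (𝓝 (1 - 1)) :=
        tendsto_const_nhds.sub hlim
      rw [sub_self] at h1
      refine h1.congr fun n => ?_
      have hb := (hbpos n).ne'
      field_simp
      ring
    refine ⟨max c₂ 2, lt_of_lt_of_le one_lt_two (le_max_right _ _), fun K hK => ?_⟩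
    have hK0 : 0 < K := lt_trans (lt_of_lt_of_le two_pos (le_max_right _ _)) hK
    have hev : ∀ᶠ n in atTop, a n / b n < c₁ / K :=
      hdiv.eventually_lt_const (div_pos hc₁ hK0)
    obtain ⟨N₁, hN₁⟩ := eventually_atTop.mp hev
    refine ⟨N₁, fun n hn => eq_empty_iff_forall_notMem.mpr ?_⟩
    rintro x ⟨⟨hx1, hx2⟩, hxE⟩
    have hτn := hτpos n
    have hxa : a n < x := by
      have h1 : c₂ * τ n ≤ max c₂ 2 * τ n :=
        mul_le_mul_of_nonneg_right (le_max_left _ _) hτn.le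
      linarith [(hab n).2]
    have hxb : x < b n := by
      have h2 : a n * K < c₁ * b n :=
        (div_lt_div_iff₀ (hbpos n) hK0).mp (hN₁ n hn)
      have h3 : c₁ * τ n < a n := (hab n).1
      nlinarith [mul_lt_mul_of_pos_right h3 hK0]
    exact (interior_subset ((hcomp n).2.1 ⟨hxa, hxb⟩)).2 hxE
  · rintro ⟨k, hk, H⟩
    have hclos : ∀ K, k < K → ∃ N, ∀ n ≥ N, Ioo (k * τ n) (K * τ n) ∩ closure E = ∅ := by
      intro K hK
      obtain ⟨N, hN⟩ := H K hK
      exact ⟨N, fun n hn => disj_closure (hN n hn)⟩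
    set μ := k + 1 / 2 with hμdef
    have hkμ : k < μ := by rw [hμdef]; linarith
    have hμK : μ < k + 1 := by rw [hμdef]; linarith
    have hk0 : 0 < k := by linarith
    have hμ0 : 0 < μ := by linarith
    obtain ⟨N₀, hN₀⟩ := hclos (k + 1) (by linarith)
    obtain ⟨N₂, hN₂⟩ := eventually_atTop.mp hτdec
    obtain ⟨N₃, hN₃⟩ := eventually_atTop.mp
      (hτ0.eventually_lt_const (div_pos (hτpos 0) hμ0))
    set N := max (max N₀ N₂) N₃ with hNdef
    have hτclos : ∀ n, τ n ∈ closure E := fun n => subset_closure (hτmem n).1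
    -- basic facts about the sup/inf sets
    have hSlo : ∀ m, (closure E ∩ Icc 0 (μ * τ m)).Nonempty := fun m =>
      ⟨τ m, hτclos m, (hτpos m).le, by nlinarith [hτpos m]⟩
    have hBddlo : ∀ m, BddAbove (closure E ∩ Icc 0 (μ * τ m)) := fun m =>
      ⟨μ * τ m, fun x hx => hx.2.2⟩
    have hBddhi : ∀ m, BddBelow (closure E ∩ Ici (μ * τ m)) := fun m =>
      ⟨μ * τ m, fun x hx => hx.2⟩
    set A : ℕ → ℝ := fun m => sSup (closure E ∩ Icc 0 (μ * τ m)) with hAdef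
    set B : ℕ → ℝ := fun m => sInf (closure E ∩ Ici (μ * τ m)) with hBdef
    have hAmem : ∀ m, A m ∈ closure E ∩ Icc 0 (μ * τ m) := fun m =>
      (isClosed_closure.inter isClosed_Icc).csSup_mem (hSlo m) (hBddlo m)
    have hAge : ∀ m, τ m ≤ A m := fun m =>
      le_csSup (hBddlo m) ⟨hτclos m, (hτpos m).le, by nlinarith [hτpos m]⟩
    have hApos : ∀ m, 0 < A m := fun m => lt_of_lt_of_le (hτpos m) (hAge m)
    have hShi : ∀ m ≥ N, (closure E ∩ Ici (μ * τ m)).Nonempty := by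
      intro m hm
      have h3 : τ m * μ < τ 0 := (lt_div_iff₀ hμ0).mp (hN₃ m (le_trans (le_max_right _ _) hm))
      exact ⟨τ 0, hτclos 0, by rw [mem_Ici]; nlinarith⟩
    have hBmem : ∀ m ≥ N, B m ∈ closure E ∩ Ici (μ * τ m) := fun m hm =>
      (isClosed_closure.inter isClosed_Ici).csInf_mem (hShi m hm) (hBddhi m)
    have hAle : ∀ m ≥ N, A m ≤ k * τ m := by
      intro m hm
      by_contra hcon
      push_neg at hcon
      have hm0 : N₀ ≤ m := le_trans (le_trans (le_max_left _ _) (le_max_left _ _)) hm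
      have := hN₀ m hm0
      rw [eq_empty_iff_forall_notMem] at this
      exact this (A m) ⟨⟨hcon, by nlinarith [(hAmem m).2.2, hτpos m]⟩, (hAmem m).1⟩
    have hBge : ∀ m ≥ N, (k + 1) * τ m ≤ B m := by
      intro m hm
      by_contra hcon
      push_neg at hcon
      have hm0 : N₀ ≤ m := le_trans (le_trans (le_max_left _ _) (le_max_left _ _)) hm
      have := hN₀ m hm0
      rw [eq_empty_iff_forall_notMem] at this
      have hBc : μ * τ m ≤ B m := (hBmem m hm).2
      exact this (B m) ⟨⟨by nlinarith [mul_lt_mul_of_pos_right hkμ (hτpos m)], hcon⟩, (hBmem m hm).1⟩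
    -- strengthened lower bound on B via arbitrary K
    have hBgeK : ∀ K, k < K → ∃ N', ∀ m, N ≤ m → N' ≤ m → K * τ m ≤ B m := by
      intro K hK
      obtain ⟨N', hN'⟩ := hclos K hK
      refine ⟨N', fun m hm hm' => ?_⟩
      by_contra hcon
      push_neg at hcon
      have := hN' m hm'
      rw [eq_empty_iff_forall_notMem] at this
      have hBc : μ * τ m ≤ B m := (hBmem m hm).2
      exact this (B m) ⟨⟨by nlinarith [mul_lt_mul_of_pos_right hkμ (hτpos m)], hcon⟩, (hBmem m hm).1⟩
    have hAB : ∀ m ≥ N, A m < B m := fun m hm => by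
      nlinarith [hAle m hm, hBge m hm, hτpos m]
    have hcompext : ∀ m ≥ N, IsCompExt E (A m) (B m) := by
      intro m hm
      refine ⟨hAB m hm, ?_, ?_⟩
      · rintro x ⟨hx1, hx2⟩
        rw [interior_char]
        have hx0 : 0 < x := lt_of_le_of_lt (hApos m).le hx1
        refine ⟨hx0, fun hxc => ?_⟩
        rcases le_or_gt x (μ * τ m) with hle | hgt
        · exact absurd (le_csSup (hBddlo m) ⟨hxc, hx0.le, hle⟩) (not_le.mpr hx1)
        · exact absurd (csInf_le (hBddhi m) ⟨hxc, hgt.le⟩) (not_le.mpr hx2)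
      · rintro a' b' ha' hb' hsub
        have hna : a' = A m := by
          rcases eq_or_lt_of_le ha' with h | h
          · exact h
          · exfalso
            have hmem : A m ∈ Ioo a' b' := ⟨h, lt_of_lt_of_le (hAB m hm) hb'⟩
            have := hsub hmem
            rw [interior_char] at this
            exact this.2 (hAmem m).1
        refine ⟨hna, ?_⟩
        rcases eq_or_lt_of_le hb' with h | h
        · exact h.symm
        · exfalso
          have hmem : B m ∈ Ioo a' b' := ⟨hna ▸ hAB m hm, h⟩
          have := hsub hmem
          rw [interior_char] at this
          exact this.2 (hBmem m hm).1
    -- assemble the sequences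
    refine ⟨fun n => A (max n N), fun n => B (max n N), ⟨?_, ?_, ?_, ?_⟩, ?_⟩
    · exact fun n => hcompext (max n N) (le_max_right _ _)
    · -- EvDecr
      rw [EvDecr, eventually_atTop]
      refine ⟨max N N₂, fun n hn => ?_⟩
      have hnN : N ≤ n := le_trans (le_max_left _ _) hn
      have hnN2 : N₂ ≤ n := le_trans (le_max_right _ _) hn
      rw [max_eq_left hnN, max_eq_left (hnN.trans (Nat.le_succ n))]
      have hmono : τ (n + 1) ≤ τ n := hN₂ n hnN2
      exact csSup_le_csSup (hBddlo n) (hSlo (n + 1))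
        (fun x hx => ⟨hx.1, hx.2.1, le_trans hx.2.2 (by nlinarith)⟩)
    · -- a → 0
      refine tendsto_of_tendsto_of_tendsto_of_le_of_le'
        hτ0 (by simpa using hτ0.const_mul k) ?_ ?_
      · rw [eventually_atTop]
        refine ⟨N, fun n hn => ?_⟩
        rw [max_eq_left hn]
        exact hAge n
      · rw [eventually_atTop]
        refine ⟨N, fun n hn => ?_⟩
        rw [max_eq_left hn]
        exact hAle n hn
    · -- (b-a)/b → 1
      have hBpos : ∀ n, 0 < B (max n N) := fun n =>
        lt_of_lt_of_le (by nlinarith [hτpos (max n N)]) (hBge _ (le_max_right _ _))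
      have hdiv0 : Tendsto (fun n => A (max n N) / B (max n N)) atTop (𝓝 0) := by
        rw [Metric.tendsto_atTop]
        intro ε hε
        set K := max (k + 1) (2 * k / ε) with hKdef
        have hKk : k < K := lt_of_lt_of_le (by linarith) (le_max_left _ _)
        have hKpos : 0 < K := lt_trans hk0 hKk
        obtain ⟨N', hN'⟩ := hBgeK K hKk
        refine ⟨N', fun n hn => ?_⟩
        set m := max n N with hmdef
        have hmN : N ≤ m := le_max_right _ _
        have hmN' : N' ≤ m := le_trans hn (le_max_left _ _)
        have h1 : A m ≤ k * τ m := hAle m hmN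
        have h2 : K * τ m ≤ B m := hN' m hmN hmN'
        have hBp : 0 < B m := lt_of_lt_of_le (by nlinarith [hτpos m]) h2
        have h3 : A m / B m ≤ k / K := by
          rw [div_le_div_iff₀ hBp hKpos]
          nlinarith [hτpos m, hApos m]
        have h4 : k / K < ε := by
          have hK2 : 2 * k / ε ≤ K := le_max_right _ _
          rw [div_lt_iff₀ hKpos]
          have : 2 * k ≤ ε * K := by
            rw [div_le_iff₀ hε] at hK2; linarith
          linarith
        rw [Real.dist_eq, sub_zero, abs_of_pos (div_pos (hApos m) hBp)]
        exact lt_of_le_of_lt h3 h4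
      have h1 : Tendsto (fun n => 1 - A (max n N) / B (max n N)) atTop (𝓝 (1 - 0)) :=
        tendsto_const_nhds.sub hdiv0
      rw [sub_zero] at h1
      refine h1.congr fun n => ?_
      have hb := (hBpos n).ne'
      field_simp
    · -- Asymp
      refine asymp_helper τ (fun n => A (max n N)) hτpos
        (fun n => hApos _) N (1 / 2) (2 * k) (by norm_num) (by linarith) ?_
      intro n hn
      simp only [show n ⊔ N = n from max_eq_left hn]
      constructor
      · nlinarith [hAge n, hτpos n]
      · nlinarith [hAle n hn, hτpos n]
end

section
/- Let E ⊆ [0,∞). Then E ∪ A is completely strongly porous at 0 for every completely strongly porous at 0 set A ⊆ [0,∞) if and only if 0 is not an accumulation point of E. -/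
open Filter Topology Set
open scoped ENNReal

section Helpers

lemma isCompExt_subset {X : Set ℝ} {a b : ℝ} (h : IsCompExt X a b) :
    Ioo a b ⊆ Ici 0 \ X := h.2.1.trans interior_subset

lemma isCompExt_nonneg {X : Set ℝ} {a b : ℝ} (h : IsCompExt X a b) : 0 ≤ a := by
  by_contra hneg
  push_neg at hneg
  have hb := h.1
  have h1 : a < min b 0 := lt_min hb hneg
  have h2 : (a + min b 0) / 2 ∈ Ioo a b := by
    constructor
    · linarith
    · have : min b 0 ≤ b := min_le_left _ _
      linarith
  have h3 := (isCompExt_subset h h2).1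
  have h4 : min b 0 ≤ 0 := min_le_right _ _
  simp only [mem_Ici] at h3
  linarith

lemma isCompExt_notMem {X : Set ℝ} {a b : ℝ} (h : IsCompExt X a b) {x : ℝ}
    (hx : x ∈ Ioo a b) : x ∉ X := (isCompExt_subset h hx).2

/-- Asymp follows from eventual two-sided bounds plus positivity. -/
lemma asymp_of_tail {x y : ℕ → ℝ} (hx : ∀ n, 0 < x n) (hy : ∀ n, 0 < y n) :
    ∀ N : ℕ, (∃ c₁ c₂ : ℝ, 0 < c₁ ∧ 0 < c₂ ∧ ∀ n, N ≤ n → c₁ * x n < y n ∧ y n < c₂ * x n) →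
    Asymp x y := by
  intro N
  induction N with
  | zero =>
    rintro ⟨c₁, c₂, h₁, h₂, h⟩
    exact ⟨c₁, c₂, h₁, h₂, fun n => h n (Nat.zero_le n)⟩
  | succ N ih =>
    rintro ⟨c₁, c₂, h₁, h₂, h⟩
    apply ih
    refine ⟨min c₁ (y N / (2 * x N)), max c₂ (2 * y N / x N), ?_, ?_, ?_⟩
    · have := hx N; have := hy N; positivity
    · exact lt_of_lt_of_le h₂ (le_max_left _ _)
    · intro n hn
      rcases eq_or_lt_of_le hn with rfl | hlt
      · constructor
        · have e1 : min c₁ (y N / (2 * x N)) * x N ≤ (y N / (2 * x N)) * x N :=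
            mul_le_mul_of_nonneg_right (min_le_right _ _) (hx N).le
          have hxN := hx N
          have e2 : (y N / (2 * x N)) * x N = y N / 2 := by
            field_simp
          have := hy N
          rw [e2] at e1
          linarith
        · have hxN := hx N
          have e2 : (2 * y N / x N) * x N = 2 * y N := by
            field_simp
          have e1 : (2 * y N / x N) * x N ≤ max c₂ (2 * y N / x N) * x N :=
            mul_le_mul_of_nonneg_right (le_max_right _ _) (hx N).le
          have := hy N
          rw [e2] at e1
          linarith
      · obtain ⟨hl, hr⟩ := h n hlt
        constructor
        · calc min c₁ (y N / (2 * x N)) * x n ≤ c₁ * x n :=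
                mul_le_mul_of_nonneg_right (min_le_left _ _) (hx n).le
            _ < y n := hl
        · calc y n < c₂ * x n := hr
            _ ≤ max c₂ (2 * y N / x N) * x n :=
                mul_le_mul_of_nonneg_right (le_max_left _ _) (hx n).le

end Helpers
section SeqCSP

/-- The gap between consecutive terms of a strictly decreasing positive sequence is a
component of the complement of the range. -/
lemma isCompExt_range {l : ℕ → ℝ} (hpos : ∀ n, 0 < l n) (hanti : StrictAnti l) (j : ℕ) :
    IsCompExt (Set.range l) (l (j + 1)) (l j) := by
  have hlt : l (j + 1) < l j := hanti (Nat.lt_succ_self j)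
  have hdisj : Ioo (l (j + 1)) (l j) ⊆ Ici 0 \ Set.range l := by
    rintro x ⟨hx1, hx2⟩
    refine ⟨le_of_lt (lt_trans (hpos _) hx1), ?_⟩
    rintro ⟨m, rfl⟩
    rcases le_or_gt m j with hm | hm
    · exact absurd (hanti.antitone hm) (not_le.mpr hx2)
    · exact absurd (hanti.antitone hm) (not_le.mpr hx1)
  refine ⟨hlt, interior_maximal hdisj isOpen_Ioo, ?_⟩
  intro a' b' ha' hb' hsub
  have hsub' : Ioo a' b' ⊆ Ici 0 \ Set.range l := hsub.trans interior_subset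
  constructor
  · by_contra hne
    have ha'' : a' < l (j + 1) := lt_of_le_of_ne ha' hne
    have : l (j + 1) ∈ Ioo a' b' := ⟨ha'', lt_of_lt_of_le hlt hb'⟩
    exact (hsub' this).2 ⟨j + 1, rfl⟩
  · by_contra hne
    have hb'' : l j < b' := lt_of_le_of_ne hb' (Ne.symm hne)
    have : l j ∈ Ioo a' b' := ⟨lt_of_le_of_lt ha' hlt, hb''⟩
    exact (hsub' this).2 ⟨j, rfl⟩

/-- A strictly decreasing positive sequence whose consecutive ratios tend to `0` has
completely strongly porous range. -/
lemma csp_of_seq {l : ℕ → ℝ} (hpos : ∀ n, 0 < l n) (hdec : ∀ n, l (n + 1) < l n)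
    (hrat : Tendsto (fun n => l (n + 1) / l n) atTop (𝓝 0)) : CSP (Set.range l) := by
  have hanti : StrictAnti l := strictAnti_nat_of_succ_lt hdec
  intro τ hτ
  obtain ⟨hEv, hmem, h0⟩ := hτ
  -- index function
  have hg : ∀ n, ∃ k, l k = τ n := fun n => (hmem n).1
  set g : ℕ → ℕ := fun n => (hg n).choose with hgdef
  have hgspec : ∀ n, l (g n) = τ n := fun n => (hg n).choose_spec
  have hg_inf : Tendsto g atTop atTop := by
    rw [tendsto_atTop]
    intro K
    have : ∀ᶠ n in atTop, τ n < l K := h0.eventually_lt_const (hpos K)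
    filter_upwards [this] with n hn
    by_contra hc
    push_neg at hc
    have h1 : l K ≤ l (g n) := hanti.antitone hc.le
    rw [hgspec n] at h1
    exact absurd hn (not_lt.mpr h1)
  set G : ℕ → ℕ := fun n => max (g n) 1 with hGdef
  have hG1 : ∀ n, 1 ≤ G n := fun n => le_max_right _ _
  have hGg : ∀ n, g n ≤ G n := fun n => le_max_left _ _
  set a : ℕ → ℝ := fun n => l (G n) with hadef
  set b : ℕ → ℝ := fun n => l (G n - 1) with hbdef
  have hGsucc : ∀ n, (G n - 1) + 1 = G n := fun n => Nat.succ_pred_eq_of_pos (hG1 n)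
  have hcomp : ∀ n, IsCompExt (Set.range l) (a n) (b n) := by
    intro n
    have := isCompExt_range hpos hanti (G n - 1)
    rwa [hGsucc n] at this
  have hG_inf : Tendsto G atTop atTop :=
    tendsto_atTop_mono hGg hg_inf
  have hG1_inf : Tendsto (fun n => G n - 1) atTop atTop := by
    rw [tendsto_atTop]
    intro K
    filter_upwards [hG_inf.eventually_ge_atTop (K + 1)] with n hn
    omega
  refine ⟨a, b, ⟨hcomp, ?_, ?_, ?_⟩, ?_⟩
  · -- EvDecr
    filter_upwards [hEv] with n hn
    have : l (g (n + 1)) ≤ l (g n) := by rw [hgspec, hgspec]; exact hn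
    have hgg : g n ≤ g (n + 1) := by
      by_contra hc
      push_neg at hc
      exact absurd (hanti hc) (not_lt.mpr this)
    exact hanti.antitone (max_le_max hgg le_rfl)
  · -- a → 0
    apply squeeze_zero' (Eventually.of_forall fun n => (hpos _).le)
      (Eventually.of_forall fun n => ?_) h0
    calc l (G n) ≤ l (g n) := hanti.antitone (hGg n)
      _ = τ n := hgspec n
  · -- ratio → 1
    have hcompagain : Tendsto (fun n => l (G n) / l (G n - 1)) atTop (𝓝 0) := by
      have : (fun n => l (G n) / l (G n - 1))
          = (fun k => l (k + 1) / l k) ∘ (fun n => G n - 1) := by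
        funext n
        simp only [Function.comp_apply, hGsucc n]
      rw [this]
      exact hrat.comp hG1_inf
    have : Tendsto (fun n => 1 - l (G n) / l (G n - 1)) atTop (𝓝 1) := by
      have h := (tendsto_const_nhds (α := ℕ) (x := (1:ℝ))).sub hcompagain
      simpa using h
    convert this using 2 with n
    have hb0 : b n ≠ 0 := (hpos _).ne'
    rw [sub_div, div_self hb0]
  · -- Asymp
    have hp0 := hpos 0
    have hp1 := hpos 1
    refine ⟨l 1 / (2 * l 0), 2, by positivity, by norm_num, fun n => ?_⟩
    have h10 : l 1 < l 0 := hdec 0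
    rcases Nat.eq_zero_or_pos (g n) with hg0 | hg1
    · have hτn : τ n = l 0 := by rw [← hgspec n, hg0]
      have han : a n = l 1 := by
        simp only [hadef, hGdef, hg0]
        norm_num
      rw [hτn, han]
      constructor
      · rw [div_mul_eq_mul_div]
        rw [div_lt_iff₀ (by positivity)]
        nlinarith
      · linarith
    · have hGn : G n = g n := max_eq_left hg1
      have han : a n = τ n := by rw [hadef]; simp only [hGn]; exact hgspec n
      have hτpos : 0 < τ n := by rw [← hgspec n]; exact hpos _
      rw [han]
      constructor
      · have hc1 : l 1 / (2 * l 0) < 1 := by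
          rw [div_lt_one (by positivity)]
          have := hpos 0
          linarith
        nlinarith
      · linarith

end SeqCSP
section Failure

lemma exists_csp_union_not_csp (E : Set ℝ) (hE : E ⊆ Ici 0)
    (hAcc : AccPt (0 : ℝ) (𝓟 E)) :
    ∃ A : Set ℝ, A ⊆ Ici 0 ∧ CSP A ∧ ¬ CSP (E ∪ A) := by
  -- E has positive points below any positive threshold
  have hP : ∀ δ : ℝ, 0 < δ → ∃ y, y ∈ E ∧ 0 < y ∧ y < δ := by
    intro δ hδ
    obtain ⟨y, ⟨hyU, hyE⟩, hy0⟩ := accPt_iff_nhds.mp hAcc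
      (Metric.ball 0 δ) (Metric.ball_mem_nhds 0 hδ)
    refine ⟨y, hyE, ?_, ?_⟩
    · exact lt_of_le_of_ne (hE hyE) (Ne.symm hy0)
    · have := Metric.mem_ball.mp hyU
      rw [Real.dist_eq, sub_zero] at this
      calc y ≤ |y| := le_abs_self y
        _ < δ := this
  -- choice function
  set f : ℝ → ℝ := fun δ => if h : 0 < δ then (hP δ h).choose else 1 with hfdef
  have hf : ∀ δ (h : 0 < δ), f δ ∈ E ∧ 0 < f δ ∧ f δ < δ := by
    intro δ h
    simp only [hfdef, dif_pos h]
    exact (hP δ h).choose_spec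
  -- the recursive sequence of points of E
  set e : ℕ → ℝ := fun n => Nat.rec (f 1) (fun k ek => f (ek * (2⁻¹ : ℝ) ^ (2 * k + 1))) n
    with hedef
  have he0 : e 0 = f 1 := rfl
  have heS : ∀ k, e (k + 1) = f (e k * (2⁻¹ : ℝ) ^ (2 * k + 1)) := fun k => rfl
  have hekey : ∀ k, e k ∈ E ∧ 0 < e k ∧ e (k + 1) < e k * (2⁻¹ : ℝ) ^ (2 * k + 1) := by
    intro k
    induction k with
    | zero =>
      have h1 := hf 1 one_pos
      have hd : (0:ℝ) < e 0 * (2⁻¹ : ℝ) ^ (2 * 0 + 1) := by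
        rw [he0]; have := h1.2.1; positivity
      have h2 := hf _ hd
      exact ⟨by rw [he0]; exact h1.1, by rw [he0]; exact h1.2.1, by rw [heS 0]; exact h2.2.2⟩
    | succ k ih =>
      have hd : (0:ℝ) < e k * (2⁻¹ : ℝ) ^ (2 * k + 1) := by
        have := ih.2.1; positivity
      have h1 := hf _ hd
      have hpos1 : 0 < e (k + 1) := by rw [heS k]; exact h1.2.1
      have hd2 : (0:ℝ) < e (k + 1) * (2⁻¹ : ℝ) ^ (2 * (k + 1) + 1) := by positivity
      have h2 := hf _ hd2
      exact ⟨by rw [heS k]; exact h1.1, hpos1, by rw [heS (k+1)]; exact h2.2.2⟩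
  have heE : ∀ k, e k ∈ E := fun k => (hekey k).1
  have hepos : ∀ k, 0 < e k := fun k => (hekey k).2.1
  have hestep : ∀ k, e (k + 1) < e k * (2⁻¹ : ℝ) ^ (2 * k + 1) := fun k => (hekey k).2.2
  -- the scaling factors
  set R : ℕ → ℝ := fun n => (2 : ℝ) ^ ((Nat.unpair n).1 + 1) with hRdef
  have hR2 : ∀ n, (2:ℝ) ≤ R n := by
    intro n
    have : (2:ℝ) ^ 1 ≤ (2:ℝ) ^ ((Nat.unpair n).1 + 1) :=
      pow_le_pow_right₀ one_le_two (by omega)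
    simpa using this
  have hRpos : ∀ n, (0:ℝ) < R n := fun n => by positivity
  have hRle : ∀ n, R n ≤ (2:ℝ) ^ (n + 1) := fun n =>
    pow_le_pow_right₀ one_le_two (by have := Nat.unpair_left_le n; omega)
  -- the counterexample sequence
  set l : ℕ → ℝ := fun n => e n / R n with hldef
  have hlpos : ∀ n, 0 < l n := fun n => div_pos (hepos n) (hRpos n)
  have hlstep : ∀ n, l (n + 1) ≤ l n * (2⁻¹ : ℝ) ^ (n + 1) := by
    intro n
    have h1 : l (n + 1) ≤ e (n + 1) / 2 :=
      div_le_div_of_nonneg_left (hepos (n + 1)).le two_pos (hR2 (n + 1))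
    have h2 : e (n + 1) / 2 ≤ e n * (2⁻¹ : ℝ) ^ (2 * n + 1) / 2 := by
      have := hestep n
      linarith
    have h3 : l n * (2⁻¹ : ℝ) ^ (n + 1) ≥ (e n / (2:ℝ) ^ (n + 1)) * (2⁻¹ : ℝ) ^ (n + 1) := by
      apply mul_le_mul_of_nonneg_right _ (by positivity)
      exact div_le_div_of_nonneg_left (hepos n).le (by positivity) (hRle n)
    have hpowc : (2⁻¹:ℝ) ^ n * (2:ℝ) ^ n = 1 := by rw [← mul_pow]; norm_num
    have hpowa : (2⁻¹:ℝ) ^ (2 * n + 1) = (2⁻¹:ℝ) ^ (n + 1) * (2⁻¹:ℝ) ^ n := by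
      rw [← pow_add]; congr 1; omega
    have h4 : e n * (2⁻¹ : ℝ) ^ (2 * n + 1) / 2 = (e n / (2:ℝ) ^ (n + 1)) * (2⁻¹ : ℝ) ^ (n + 1) := by
      rw [div_mul_eq_mul_div, div_eq_div_iff (by positivity) (by positivity), hpowa, pow_succ]
      calc e n * ((2⁻¹:ℝ) ^ (n+1) * (2⁻¹:ℝ) ^ n) * ((2:ℝ) ^ n * 2)
          = e n * (2⁻¹:ℝ) ^ (n+1) * 2 * ((2⁻¹:ℝ) ^ n * (2:ℝ) ^ n) := by ring
        _ = e n * (2⁻¹:ℝ) ^ (n+1) * 2 := by rw [hpowc, mul_one]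
    linarith
  have hldec : ∀ n, l (n + 1) < l n := by
    intro n
    calc l (n + 1) ≤ l n * (2⁻¹ : ℝ) ^ (n + 1) := hlstep n
      _ < l n * 1 := by
        apply mul_lt_mul_of_pos_left _ (hlpos n)
        apply pow_lt_one₀ (by norm_num) (by norm_num) (by omega)
      _ = l n := mul_one _
  have hlrat : Tendsto (fun n => l (n + 1) / l n) atTop (𝓝 0) := by
    apply squeeze_zero' (Eventually.of_forall fun n => (div_pos (hlpos (n+1)) (hlpos n)).le)
      (Eventually.of_forall fun n => ?_)
      (tendsto_pow_atTop_nhds_zero_of_lt_one (by norm_num : (0:ℝ) ≤ 2⁻¹) (by norm_num))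
    rw [div_le_iff₀ (hlpos n)]
    calc l (n + 1) ≤ l n * (2⁻¹:ℝ) ^ (n + 1) := hlstep n
      _ ≤ l n * (2⁻¹:ℝ) ^ n := by
        apply mul_le_mul_of_nonneg_left _ (hlpos n).le
        apply pow_le_pow_of_le_one (by norm_num) (by norm_num) (by omega)
      _ = (2⁻¹:ℝ) ^ n * l n := mul_comm _ _
  refine ⟨Set.range l, ?_, csp_of_seq hlpos hldec hlrat, ?_⟩
  · rintro x ⟨n, rfl⟩
    exact (hlpos n).le
  -- now the failure
  intro hCSP
  have hanti : StrictAnti l := strictAnti_nat_of_succ_lt hldec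
  -- e tends to zero, hence l does as well
  have hl_lt_e : ∀ n, l n ≤ e n := by
    intro n
    have hrfl : l n = e n / R n := rfl
    rw [hrfl]
    calc e n / R n ≤ e n / 2 :=
      div_le_div_of_nonneg_left (hepos n).le two_pos (hR2 n)
      _ ≤ e n := by have := hepos n; linarith
  have he_half : ∀ n, e (n + 1) ≤ e n / 2 := by
    intro n
    have h2 : (2⁻¹:ℝ) ^ (2 * n + 1) ≤ 2⁻¹ := by
      apply pow_le_of_le_one (by norm_num) (by norm_num) (by omega)
    have := hestep n
    have h3 : e n * (2⁻¹ : ℝ) ^ (2*n+1) ≤ e n * 2⁻¹ :=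
      mul_le_mul_of_nonneg_left h2 (hepos n).le
    rw [div_eq_mul_inv]
    linarith
  have he_bound : ∀ n, e n ≤ e 0 * (2⁻¹ : ℝ) ^ n := by
    intro n
    induction n with
    | zero => simp
    | succ n ih =>
      calc e (n + 1) ≤ e n / 2 := he_half n
        _ ≤ e 0 * (2⁻¹:ℝ) ^ n / 2 := by linarith
        _ = e 0 * (2⁻¹:ℝ) ^ (n + 1) := by rw [pow_succ]; ring
  have he0' : Tendsto e atTop (𝓝 0) := by
    apply squeeze_zero' (Eventually.of_forall fun n => (hepos n).le)
      (Eventually.of_forall he_bound)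
    have : Tendsto (fun n => (2⁻¹:ℝ) ^ n) atTop (𝓝 0) :=
      tendsto_pow_atTop_nhds_zero_of_lt_one (by norm_num) (by norm_num)
    have h := this.const_mul (e 0)
    simpa using h
  have hl0 : Tendsto l atTop (𝓝 0) :=
    squeeze_zero' (Eventually.of_forall fun n => (hlpos n).le)
      (Eventually.of_forall hl_lt_e) he0'
  -- l is in E0d of the union
  have hτmem : l ∈ E0d (E ∪ Set.range l) := by
    refine ⟨Eventually.of_forall fun n => (hldec n).le, fun n => ⟨Or.inr ⟨n, rfl⟩, ?_⟩, hl0⟩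
    simp only [mem_singleton_iff]
    exact (hlpos n).ne'
  obtain ⟨a, b, ⟨hcomp, hEva, ha0, hratio⟩, c₁, c₂, hc₁, hc₂, hbounds⟩ := hCSP l hτmem
  -- choose the blocked scale
  obtain ⟨s, hs⟩ := pow_unbounded_of_one_lt c₂ (one_lt_two (α := ℝ))
  set κ := c₁ / (2:ℝ) ^ (s + 1) with hκdef
  have hκpos : 0 < κ := by positivity
  have hκ1 : 1 - κ < 1 := by linarith
  obtain ⟨N, hN⟩ := (eventually_atTop).mp (hratio.eventually (eventually_gt_nhds hκ1))
  set n := Nat.pair s N with hndef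
  have hun : (Nat.unpair n).1 = s := by rw [hndef, Nat.unpair_pair]
  have hRn : R n = (2:ℝ) ^ (s + 1) := by
    have : R n = (2:ℝ) ^ ((Nat.unpair n).1 + 1) := rfl
    rw [this, hun]
  have hln : l n = e n / (2:ℝ) ^ (s + 1) := by
    have : l n = e n / R n := rfl
    rw [this, hRn]
  have hnN : N ≤ n := Nat.right_le_pair s N
  -- bounds
  have hb1 := (hbounds n).1
  have hb2 := (hbounds n).2
  have hapos : 0 < a n := lt_trans (mul_pos hc₁ (hlpos n)) hb1
  have haen : a n < e n := by
    calc a n < c₂ * l n := hb2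
      _ < (2:ℝ) ^ s * l n := by
        apply mul_lt_mul_of_pos_right hs (hlpos n)
      _ = e n / 2 := by
        rw [hln, pow_succ]
        field_simp
      _ < e n := by have := hepos n; linarith
  have hblee : b n ≤ e n := by
    by_contra hc
    push_neg at hc
    have : e n ∈ Ioo (a n) (b n) := ⟨haen, hc⟩
    exact (isCompExt_subset (hcomp n) this).2 (Or.inl (heE n))
  have hab : a n < b n := (hcomp n).1
  have hbpos : 0 < b n := lt_trans hapos hab
  -- ratio bound
  have hratbound : (b n - a n) / b n ≤ 1 - κ := by
    have h1 : κ * b n ≤ a n := by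
      have : κ * e n = c₁ * l n := by
        rw [hκdef, hln]
        field_simp
      calc κ * b n ≤ κ * e n := mul_le_mul_of_nonneg_left hblee hκpos.le
        _ = c₁ * l n := this
        _ ≤ a n := hb1.le
    rw [div_le_iff₀ hbpos]
    nlinarith
  have := hN n hnN
  linarith

end Failure
section Union

/-- Truncating a component of the complement of `A` at the first point of `E` inside it
gives a component of the complement of `E ∪ A`. -/
lemma isCompExt_union_of {A E : Set ℝ} {a b c : ℝ} (hA : IsCompExt A a b)
    (hac : a < c) (hcb : c ≤ b) (hcE : ∀ x ∈ E, x ∉ Ioo a c)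
    (hc3 : c = b ∨ ∀ δ : ℝ, 0 < δ → ∃ x, x ∈ E ∧ x ∈ Ioo a b ∧ x < c + δ) :
    IsCompExt (E ∪ A) a c := by
  have ha0 : 0 ≤ a := isCompExt_nonneg hA
  have hsubA : Ioo a b ⊆ Ici 0 \ A := isCompExt_subset hA
  refine ⟨hac, ?_, ?_⟩
  · apply interior_maximal _ isOpen_Ioo
    rintro x ⟨hx1, hx2⟩
    have hxb : x ∈ Ioo a b := ⟨hx1, lt_of_lt_of_le hx2 hcb⟩
    refine ⟨(hsubA hxb).1, ?_⟩
    rintro (hxE | hxA)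
    · exact hcE x hxE ⟨hx1, hx2⟩
    · exact (hsubA hxb).2 hxA
  · intro a' b' ha' hb' hsub
    have hsub' : Ioo a' b' ⊆ Ici 0 \ (E ∪ A) := hsub.trans interior_subset
    have ha'0 : 0 ≤ a' := by
      by_contra hc'
      push_neg at hc'
      have hmem : a' / 2 ∈ Ioo a' b' := by
        constructor
        · linarith
        · have : a < b' := lt_of_lt_of_le hac hb'
          linarith
      have := (hsub' hmem).1
      simp only [mem_Ici] at this
      linarith
    have haa : a' = a := by
      by_contra hne
      have ha'' : a' < a := lt_of_le_of_ne ha' hne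
      have hnotsub : ¬ Ioo a' b ⊆ interior (Ici 0 \ A) := by
        intro hctr
        exact hne (hA.2.2 a' b ha''.le le_rfl hctr).1
      have hnotsub' : ¬ Ioo a' b ⊆ Ici 0 \ A :=
        fun hctr => hnotsub (interior_maximal hctr isOpen_Ioo)
      obtain ⟨x, hx, hxn⟩ := not_subset.mp hnotsub'
      have hx0 : 0 ≤ x := le_of_lt (lt_of_le_of_lt ha'0 hx.1)
      have hxA : x ∈ A := by
        by_contra hxA
        exact hxn ⟨hx0, hxA⟩
      have hxa : x ≤ a := by
        by_contra hgt
        push_neg at hgt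
        exact (hsubA ⟨hgt, hx.2⟩).2 hxA
      have hmem : x ∈ Ioo a' b' := ⟨hx.1, lt_of_le_of_lt hxa (lt_of_lt_of_le hac hb')⟩
      exact (hsub' hmem).2 (Or.inr hxA)
    refine ⟨haa, ?_⟩
    by_contra hne
    have hb'' : c < b' := lt_of_le_of_ne hb' (Ne.symm hne)
    rcases hc3 with rfl | happrox
    · have hnotsub : ¬ Ioo a b' ⊆ interior (Ici 0 \ A) := by
        intro hctr
        exact hne (hA.2.2 a b' le_rfl hb' hctr).2
      have hnotsub' : ¬ Ioo a b' ⊆ Ici 0 \ A :=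
        fun hctr => hnotsub (interior_maximal hctr isOpen_Ioo)
      obtain ⟨x, hx, hxn⟩ := not_subset.mp hnotsub'
      have hx0 : 0 ≤ x := le_of_lt (lt_of_le_of_lt ha0 hx.1)
      have hxA : x ∈ A := by
        by_contra hxA
        exact hxn ⟨hx0, hxA⟩
      have hxb : c ≤ x := by
        by_contra hgt
        push_neg at hgt
        exact (hsubA ⟨hx.1, hgt⟩).2 hxA
      have hmem : x ∈ Ioo a' b' := ⟨haa ▸ hx.1, hx.2⟩
      exact (hsub' hmem).2 (Or.inr hxA)
    · obtain ⟨x, hxE, hxab, hxlt⟩ := happrox (b' - c) (by linarith)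
      have hmem : x ∈ Ioo a' b' := ⟨haa ▸ hxab.1, by linarith⟩
      exact (hsub' hmem).2 (Or.inl hxE)

lemma csp_union_of_far (E : Set ℝ) (hE : E ⊆ Ici 0) {ε : ℝ} (hε : 0 < ε)
    (hεE : ∀ x ∈ E, x ≠ 0 → ε ≤ x) (A : Set ℝ) (hA : A ⊆ Ici 0) (hCSPA : CSP A) :
    CSP (E ∪ A) := by
  classical
  intro τ hτ
  obtain ⟨hEv, hmem, h0⟩ := hτ
  have hτpos : ∀ n, 0 < τ n := by
    intro n
    obtain ⟨hm, hne⟩ := hmem n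
    have h1 : 0 ≤ τ n := by rcases hm with h | h; exacts [hE h, hA h]
    have h2 : τ n ≠ 0 := by simpa using hne
    exact lt_of_le_of_ne h1 (Ne.symm h2)
  obtain ⟨M₀, hM₀⟩ := eventually_atTop.mp hEv
  obtain ⟨N₁, hN₁⟩ := eventually_atTop.mp (h0.eventually_lt_const hε)
  set N₀ := max M₀ N₁ with hN₀def
  have hτA : ∀ n, N₀ ≤ n → τ n ∈ A := by
    intro n hn
    obtain ⟨hm, hne⟩ := hmem n
    rcases hm with h | h
    · exfalso
      have h1 := hεE _ h (by simpa using hne)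
      have h2 := hN₁ n (le_trans (le_max_right _ _) hn)
      linarith
    · exact h
  have hmax_tendsto : ∀ K : ℕ, Tendsto (fun n => max n K) atTop atTop :=
    fun K => tendsto_atTop_mono (fun n => le_max_left n K) tendsto_id
  set σ : ℕ → ℝ := fun n => τ (max n N₀) with hσdef
  have hσmem : σ ∈ E0d A := by
    refine ⟨?_, ?_, ?_⟩
    · refine eventually_atTop.mpr ⟨N₀, fun n hn => ?_⟩
      show τ (max (n + 1) N₀) ≤ τ (max n N₀)
      rw [max_eq_left (by omega : N₀ ≤ n + 1), max_eq_left hn]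
      exact hM₀ n (le_trans (le_max_left _ _) hn)
    · intro n
      refine ⟨hτA _ (le_max_right _ _), ?_⟩
      simpa using (hmem (max n N₀)).2
    · exact h0.comp (hmax_tendsto N₀)
  obtain ⟨a, b, ⟨hcomp, hEva, ha0, hratio⟩, c₁, c₂, hc₁, hc₂, hbounds⟩ := hCSPA σ hσmem
  have hσpos : ∀ n, 0 < σ n := fun n => hτpos _
  have hapos : ∀ n, 0 < a n := fun n => lt_trans (mul_pos hc₁ (hσpos n)) (hbounds n).1
  have hab : ∀ n, a n < b n := fun n => (hcomp n).1
  have hbpos : ∀ n, 0 < b n := fun n => lt_trans (hapos n) (hab n)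
  set S : ℕ → Set ℝ := fun n => E ∩ Ioo (a n) (b n) with hSdef
  have hSlb : ∀ n, ∀ x ∈ S n, ε ≤ x := by
    rintro n x ⟨hxE, hxI⟩
    apply hεE x hxE
    have h0x : 0 ≤ a n := isCompExt_nonneg (hcomp n)
    exact ne_of_gt (lt_of_le_of_lt h0x hxI.1)
  set c : ℕ → ℝ := fun n => if h : (S n).Nonempty then sInf (S n) else b n with hcdef
  have hc_spec : ∀ n, (c n ≤ b n) ∧ (∀ x ∈ E, x ∉ Ioo (a n) (c n)) ∧
      (ε ≤ c n ∨ c n = b n) ∧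
      (c n = b n ∨ ∀ δ : ℝ, 0 < δ → ∃ x, x ∈ E ∧ x ∈ Ioo (a n) (b n) ∧ x < c n + δ) := by
    intro n
    by_cases h : (S n).Nonempty
    · have hbdd : BddBelow (S n) := ⟨ε, fun x hx => hSlb n x hx⟩
      have hcn : c n = sInf (S n) := by rw [hcdef]; simp only [dif_pos h]
      obtain ⟨x₀, hx₀⟩ := h
      refine ⟨?_, ?_, ?_, ?_⟩
      · rw [hcn]; exact le_trans (csInf_le hbdd hx₀) hx₀.2.2.le
      · intro x hxE hxI
        have hxS : x ∈ S n := ⟨hxE, hxI.1, lt_of_lt_of_le hxI.2 ((hcn ▸ le_trans (csInf_le hbdd hx₀) hx₀.2.2.le) : c n ≤ b n)⟩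
        have := csInf_le hbdd hxS
        rw [← hcn] at this
        exact absurd hxI.2 (not_lt.mpr this)
      · left; rw [hcn]; exact le_csInf ⟨x₀, hx₀⟩ (hSlb n)
      · right
        intro δ hδ
        rw [hcn]
        obtain ⟨x, hx, hxlt⟩ := Real.lt_sInf_add_pos ⟨x₀, hx₀⟩ hδ
        exact ⟨x, hx.1, hx.2, hxlt⟩
    · have hcn : c n = b n := by rw [hcdef]; simp only [dif_neg h]
      refine ⟨hcn.le, ?_, Or.inr hcn, Or.inl hcn⟩
      intro x hxE hxI
      exact h ⟨x, hxE, hxI.1, lt_of_lt_of_le hxI.2 hcn.le⟩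
  obtain ⟨M, hM⟩ := eventually_atTop.mp (ha0.eventually_lt_const hε)
  have hacn : ∀ n, M ≤ n → a n < c n := by
    intro n hn
    rcases (hc_spec n).2.2.1 with h | h
    · exact lt_of_lt_of_le (hM n hn) h
    · rw [h]; exact hab n
  have hUcomp : ∀ n, M ≤ n → IsCompExt (E ∪ A) (a n) (c n) :=
    fun n hn => isCompExt_union_of (hcomp n) (hacn n hn) (hc_spec n).1 (hc_spec n).2.1
      (hc_spec n).2.2.2
  refine ⟨fun n => a (max n M), fun n => c (max n M), ⟨?_, ?_, ?_, ?_⟩, ?_⟩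
  · intro n
    exact hUcomp _ (le_max_right _ _)
  · obtain ⟨Ma, hMa⟩ := eventually_atTop.mp hEva
    refine eventually_atTop.mpr ⟨max Ma M, fun n hn => ?_⟩
    have hnM : M ≤ n := le_trans (le_max_right _ _) hn
    show a (max (n + 1) M) ≤ a (max n M)
    rw [max_eq_left (by omega : M ≤ n + 1), max_eq_left hnM]
    exact hMa n (le_trans (le_max_left _ _) hn)
  · exact ha0.comp (hmax_tendsto M)
  · -- ratio tends to 1
    have habrat : Tendsto (fun n => a n / b n) atTop (𝓝 0) := by
      have h1 : Tendsto (fun n => 1 - (b n - a n) / b n) atTop (𝓝 0) := by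
        have h := (tendsto_const_nhds (α := ℕ) (x := (1:ℝ))).sub hratio
        simpa using h
      convert h1 using 2 with n
      have hbne : b n ≠ 0 := (hbpos n).ne'
      rw [sub_div, div_self hbne]
      ring
    have hkey : Tendsto (fun n => a (max n M) / c (max n M)) atTop (𝓝 0) := by
      have hg : Tendsto (fun n => max (a (max n M) / b (max n M)) (a (max n M) / ε))
          atTop (𝓝 0) := by
        have h1 : Tendsto (fun n => a (max n M) / b (max n M)) atTop (𝓝 0) :=
          habrat.comp (hmax_tendsto M)
        have h2 : Tendsto (fun n => a (max n M) / ε) atTop (𝓝 0) := by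
          have := (ha0.comp (hmax_tendsto M)).div_const ε
          simpa using this
        have := h1.max h2
        simpa using this
      apply squeeze_zero' (Eventually.of_forall fun n => ?_)
        (Eventually.of_forall fun n => ?_) hg
      · exact (div_pos (hapos _) (lt_trans (hapos _) (hacn _ (le_max_right _ _)))).le
      · rcases (hc_spec (max n M)).2.2.1 with h | h
        · refine le_trans ?_ (le_max_right _ _)
          exact div_le_div_of_nonneg_left (hapos _).le hε h
        · rw [h]
          exact le_max_left _ _
    have h2 : Tendsto (fun n => 1 - a (max n M) / c (max n M)) atTop (𝓝 1) := by
      have h := (tendsto_const_nhds (α := ℕ) (x := (1:ℝ))).sub hkey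
      simpa using h
    convert h2 using 2 with n
    have hcne : c (max n M) ≠ 0 :=
      (lt_trans (hapos _) (hacn _ (le_max_right _ _))).ne'
    rw [sub_div, div_self hcne]
  · -- Asymp
    apply asymp_of_tail hτpos (fun n => hapos _) (max N₀ M)
    refine ⟨c₁, c₂, hc₁, hc₂, fun n hn => ?_⟩
    have hnN₀ : N₀ ≤ n := le_trans (le_max_left _ _) hn
    have hnM : M ≤ n := le_trans (le_max_right _ _) hn
    have h2 : σ n = τ n := by
      show τ (max n N₀) = τ n
      rw [max_eq_left hnN₀]
    have h3 := hbounds n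
    rw [h2] at h3
    show c₁ * τ n < a (max n M) ∧ a (max n M) < c₂ * τ n
    rw [max_eq_left hnM]
    exact h3

end Union


/-- `E ∪ A` is completely strongly porous at `0` for every completely
strongly porous at `0` set `A ⊆ [0,∞)` iff `0` is not an accumulation point of `E`. -/
theorem stmt_5 (E : Set ℝ) (hE : E ⊆ Ici 0) :
    (∀ A : Set ℝ, A ⊆ Ici 0 → CSP A → CSP (E ∪ A)) ↔
      ¬ AccPt (0 : ℝ) (Filter.principal E) := by
  constructor
  · intro H hAcc
    obtain ⟨A, hA1, hA2, hA3⟩ := exists_csp_union_not_csp E hE hAcc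
    exact hA3 (H A hA1 hA2)
  · intro hn A hA hCSPA
    rw [accPt_iff_nhds] at hn
    push_neg at hn
    obtain ⟨U, hU, hUE⟩ := hn
    obtain ⟨ε, hε, hball⟩ := Metric.mem_nhds_iff.mp hU
    have hεE : ∀ x ∈ E, x ≠ 0 → ε ≤ x := by
      intro x hxE hx0
      by_contra hlt
      push_neg at hlt
      have hx0' : 0 ≤ x := hE hxE
      have : x ∈ Metric.ball (0:ℝ) ε := by
        rw [Metric.mem_ball, Real.dist_eq, sub_zero, abs_of_nonneg hx0']
        exact hlt
      exact hx0 (hUE x ⟨hball this, hxE⟩)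
    exact csp_union_of_far E hE hε hεE A hA hCSPA
end

section
/- Let (X,d,p) be a pointed metric space. The following statements are equivalent: (i) there is a constant C < ∞ such that for every scaling sequence (r_n) and every sequence (x_n) of points of X for which the finite limit lim_{n→∞} d(x_n,p)/r_n exists, this limit is at most C; (ii) p is an isolated point of X. (Statement (i) expresses that the family of all pretangent spaces to X at p is uniformly bounded, since the distance in a pretangent space from the marked point π(p̃) to π(x̃) equals lim_{n→∞} d(x_n,p)/r_n.) -/
open Filter Topology Set
open scoped ENNReal

/-- There is a finite constant `C` bounding all limits
`lim d(xₙ,p)/rₙ` (over all scaling sequences and sequences for which the finite limit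
exists) iff `p` is an isolated point of `X`. -/
theorem stmt_6 {X : Type*} [MetricSpace X] (p : X) :
    (∃ C : ℝ, ∀ (r : ℕ → ℝ) (x : ℕ → X) (L : ℝ), ScalingSeq r →
        Tendsto (fun n => dist (x n) p / r n) atTop (𝓝 L) → L ≤ C) ↔
      𝓝[≠] p = ⊥ := by
  constructor
  · rintro ⟨C, hC⟩
    by_contra hne
    have hNB : (𝓝[≠] p).NeBot := ⟨hne⟩
    have hcl : p ∈ closure ({p}ᶜ : Set X) := mem_closure_iff_nhdsWithin_neBot.2 hNB
    have hx : ∀ n : ℕ, ∃ y : X, y ≠ p ∧ dist (y : X) p < 1 / (n + 1) := by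
      intro n
      obtain ⟨y, hy, hyd⟩ := Metric.mem_closure_iff.1 hcl (1 / (n + 1)) (by positivity)
      exact ⟨y, hy, by rwa [dist_comm] at hyd⟩
    choose x hxne hxd using hx
    set M : ℝ := max C 0 + 1 with hM
    have hM0 : 0 < M := by positivity
    have hdpos : ∀ n, 0 < dist (x n) p := fun n => dist_pos.2 (hxne n)
    set r : ℕ → ℝ := fun n => dist (x n) p / M with hr
    have hrpos : ∀ n, 0 < r n := fun n => div_pos (hdpos n) hM0
    have hd0 : Tendsto (fun n => dist (x n) p) atTop (𝓝 0) := by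
      have h1 : Tendsto (fun n : ℕ => 1 / ((n : ℝ) + 1)) atTop (𝓝 0) :=
        tendsto_one_div_add_atTop_nhds_zero_nat
      refine squeeze_zero (fun n => (hdpos n).le) (fun n => (hxd n).le) h1
    have hr0 : Tendsto r atTop (𝓝 0) := by
      simpa using hd0.div_const M
    have hlim : Tendsto (fun n => dist (x n) p / r n) atTop (𝓝 M) := by
      have : ∀ n, dist (x n) p / r n = M := by
        intro n
        rw [hr, div_div_eq_mul_div, mul_comm, mul_div_assoc, div_self (hdpos n).ne', mul_one]
      simpa [this] using tendsto_const_nhds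
    have := hC r x M ⟨hrpos, hr0⟩ hlim
    have : C < M := lt_of_le_of_lt (le_max_left C 0) (by simp [hM])
    linarith [hC r x M ⟨hrpos, hr0⟩ hlim]
  · intro h
    refine ⟨0, fun r x L hr hL => ?_⟩
    have hempty : (∅ : Set X) ∈ 𝓝[≠] p := by simp [h]
    rw [mem_nhdsWithin] at hempty
    obtain ⟨U, hUo, hpU, hU⟩ := hempty
    obtain ⟨ε, hε, hball⟩ := Metric.isOpen_iff.1 hUo p hpU
    have hsingle : ∀ y : X, dist y p < ε → y = p := by
      intro y hy
      by_contra hyp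
      exact absurd (hU ⟨hball hy, hyp⟩) (by simp)
    set B : ℝ := |L| + 1 with hB
    have hB0 : 0 < B := by positivity
    have h1 : ∀ᶠ n in atTop, dist (x n) p / r n < B :=
      hL.eventually (Filter.Tendsto.eventually_lt_const (by
        calc L ≤ |L| := le_abs_self L
        _ < B := by simp [hB]) tendsto_id) |>.mono (fun n hn => hn)
    have h2 : ∀ᶠ n in atTop, r n < ε / B :=
      hr.2.eventually (Filter.Tendsto.eventually_lt_const (by positivity) tendsto_id)
    have heq : ∀ᶠ n in atTop, x n = p := by
      filter_upwards [h1, h2] with n hn1 hn2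
      by_contra hne
      have hd : ε ≤ dist (x n) p := by
        by_contra hlt
        exact hne (hsingle _ (lt_of_not_ge hlt))
      have hrp := hr.1 n
      have : B < dist (x n) p / r n := by
        have : B * r n < ε := by
          have := (lt_div_iff₀ hB0).1 hn2
          linarith [this]
        calc B = B * r n / r n := by field_simp
        _ < ε / r n := by exact div_lt_div_of_pos_right this hrp
        _ ≤ dist (x n) p / r n := div_le_div_of_nonneg_right hd hrp.le
      linarith
    have hzero : Tendsto (fun n => dist (x n) p / r n) atTop (𝓝 0) := by
      refine Tendsto.congr' ?_ tendsto_const_nhds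
      filter_upwards [heq] with n hn
      simp [hn]
    have : L = 0 := tendsto_nhds_unique hL hzero
    simp [this]
end

section
/- Let (X,d,p) be a pointed metric space. Then: (i1) if (r_n) is a scaling sequence and F is a self-stable family w.r.t. (r_n) containing p̃, and there exist x̃ = (x_n), ỹ = (y_n) ∈ F with lim_{n→∞} d(x_n,y_n)/r_n > 0, then there exist c > 0 and a strictly increasing sequence (n_k) of natural numbers such that (c·r_{n_k})_{k∈ℕ} is a normal scaling sequence for (X,d,p); (i2) if (x_n) is a sequence of points of X, (r_n) is a scaling sequence, and lim_{n→∞} d(x_n,p)/r_n = 1, then there exists a strictly increasing sequence (n_k) of natural numbers such that (d(x_{n_k},p))_{k∈ℕ} is decreasing; (i3) if (r_n) is a normal scaling sequence for (X,d,p), then there exists a sequence (x_n) of points of X such that lim_{n→∞} d(x_n,p)/r_n = 1 and (d(x_n,p))_{n∈ℕ} is eventually decreasing. -/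
open Filter Topology Set
open scoped ENNReal

/-! ### Auxiliary lemmas -/

lemma antitone_subseq_of_tendsto_zero' (f : ℕ → ℝ)
    (h0 : Tendsto f atTop (𝓝 (0:ℝ))) (hpos : ∀ᶠ n in atTop, 0 < f n) :
    ∃ φ : ℕ → ℕ, StrictMono φ ∧ Antitone (fun k => f (φ k)) := by
  obtain ⟨N, hN⟩ := eventually_atTop.1 hpos
  have H : ∀ m, N ≤ m → ∃ n, m < n ∧ N ≤ n ∧ f n ≤ f m := by
    intro m hm
    obtain ⟨M, hM⟩ := eventually_atTop.1 (h0.eventually_lt_const (hN m hm))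
    refine ⟨max (m+1) M, ?_, ?_, (hM _ (le_max_right _ _)).le⟩
    · exact lt_of_lt_of_le (Nat.lt_succ_self m) (le_max_left _ _)
    · exact le_trans hm (le_trans (Nat.le_succ m) (le_max_left _ _))
  choose! next hlt hle hdec using H
  set g : ℕ → ℕ := fun k => Nat.rec N (fun _ p => next p) k with hg
  have hgN : ∀ k, N ≤ g k := by
    intro k
    induction k with
    | zero => exact le_refl N
    | succ k ih => exact hle _ ih
  have hsm : StrictMono g := strictMono_nat_of_lt_succ (fun k => hlt _ (hgN k))
  exact ⟨g, hsm, antitone_nat_of_succ_le (fun k => hdec _ (hgN k))⟩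

/-- If `s n / r n → 1` with `r` a scaling sequence and `s` nonnegative, then `s → 0`
and `s` is eventually positive. -/
lemma tendsto_zero_and_evpos (r s : ℕ → ℝ) (hr : ScalingSeq r)
    (hs : ∀ n, 0 ≤ s n)
    (h : Tendsto (fun n => s n / r n) atTop (𝓝 (1:ℝ))) :
    Tendsto s atTop (𝓝 (0:ℝ)) ∧ ∀ᶠ n in atTop, 0 < s n := by
  constructor
  · have := h.mul hr.2
    rw [mul_zero] at this
    refine this.congr (fun n => ?_)
    exact div_mul_cancel₀ _ (hr.1 n).ne'
  · have h2 : ∀ᶠ n in atTop, (1:ℝ)/2 < s n / r n :=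
      h.eventually_const_lt (by norm_num)
    refine h2.mono (fun n hn => ?_)
    have h3 : (0:ℝ) < s n / r n := lt_trans (by norm_num) hn
    have := (lt_div_iff₀ (hr.1 n)).mp h3
    simpa using this

/-- Running argmin index for `s` starting at `N0`. -/
noncomputable def minIdx (s : ℕ → ℝ) (N0 : ℕ) : ℕ → ℕ
  | 0 => N0
  | n+1 => if s (N0+n+1) ≤ s (minIdx s N0 n) then N0+n+1 else minIdx s N0 n

lemma minIdx_ge (s : ℕ → ℝ) (N0 n : ℕ) : N0 ≤ minIdx s N0 n := by
  induction n with
  | zero => exact le_refl _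
  | succ n ih =>
    rw [minIdx]
    split
    · omega
    · exact ih

lemma minIdx_le (s : ℕ → ℝ) (N0 n : ℕ) : minIdx s N0 n ≤ N0 + n := by
  induction n with
  | zero => simp [minIdx]
  | succ n ih =>
    rw [minIdx]
    split
    · omega
    · omega

lemma s_minIdx_succ_le (s : ℕ → ℝ) (N0 n : ℕ) :
    s (minIdx s N0 (n+1)) ≤ s (minIdx s N0 n) := by
  rw [minIdx]
  split
  · assumption
  · exact le_refl _

lemma s_minIdx_anti (s : ℕ → ℝ) (N0 : ℕ) : Antitone (fun n => s (minIdx s N0 n)) :=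
  antitone_nat_of_succ_le (s_minIdx_succ_le s N0)

lemma s_minIdx_min (s : ℕ → ℝ) (N0 : ℕ) :
    ∀ n j, N0 ≤ j → j ≤ N0 + n → s (minIdx s N0 n) ≤ s j := by
  intro n
  induction n with
  | zero =>
    intro j h1 h2
    have : j = N0 := by omega
    subst this
    exact le_refl _
  | succ n ih =>
    intro j h1 h2
    rcases Nat.lt_or_ge j (N0+n+1) with hj | hj
    · exact le_trans (s_minIdx_succ_le s N0 n) (ih j h1 (by omega))
    · have hje : j = N0+n+1 := by omega
      subst hje
      rw [minIdx]
      split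
      · exact le_refl _
      · next h => exact (not_le.mp h).le

/-- (i1) a self-stable family containing `p̃` with two members at positive
limit distance yields, after rescaling by a constant and passing to a subsequence, a
normal scaling sequence; (i2) if `lim d(xₙ,p)/rₙ = 1` then `(d(x_{n_k},p))ₖ` is
decreasing along some subsequence; (i3) every normal scaling sequence admits a witness
`(xₙ)` with `(d(xₙ,p))ₙ` eventually decreasing. -/
theorem stmt_7 {X : Type*} [MetricSpace X] (p : X) :
    (∀ (r : ℕ → ℝ) (F : Set (ℕ → X)), ScalingSeq r → SelfStable r F →
      (fun _ => p) ∈ F → ∀ x ∈ F, ∀ y ∈ F, ∀ L : ℝ, 0 < L →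
      Tendsto (fun n => dist (x n) (y n) / r n) atTop (𝓝 L) →
      ∃ c : ℝ, 0 < c ∧ ∃ φ : ℕ → ℕ, StrictMono φ ∧
        NormalScaling p (fun k => c * r (φ k))) ∧
    (∀ (r : ℕ → ℝ) (x : ℕ → X), ScalingSeq r →
      Tendsto (fun n => dist (x n) p / r n) atTop (𝓝 (1 : ℝ)) →
      ∃ φ : ℕ → ℕ, StrictMono φ ∧ Antitone (fun k => dist (x (φ k)) p)) ∧
    (∀ r : ℕ → ℝ, NormalScaling p r →
      ∃ x : ℕ → X, Tendsto (fun n => dist (x n) p / r n) atTop (𝓝 (1 : ℝ)) ∧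
        EvDecr (fun n => dist (x n) p)) := by
  refine ⟨?_, ?_, ?_⟩
  · -- (i1)
    intro r F hr hF hp x hx y hy L hL hxy
    obtain ⟨A, hA⟩ := hF x hx _ hp
    obtain ⟨B, hB⟩ := hF y hy _ hp
    simp only at hA hB
    have hA0 : 0 ≤ A := ge_of_tendsto' hA (fun n => div_nonneg dist_nonneg (hr.1 n).le)
    have hB0 : 0 ≤ B := ge_of_tendsto' hB (fun n => div_nonneg dist_nonneg (hr.1 n).le)
    have hLAB : L ≤ A + B := by
      refine le_of_tendsto_of_tendsto' hxy (hA.add hB) (fun n => ?_)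
      rw [← add_div]
      have : dist (x n) (y n) ≤ dist (x n) p + dist (y n) p := by
        calc dist (x n) (y n) ≤ dist (x n) p + dist p (y n) := dist_triangle _ _ _
        _ = dist (x n) p + dist (y n) p := by rw [dist_comm p]
      gcongr
      exact (hr.1 n).le
    have key : ∀ (z : ℕ → X) (A : ℝ), 0 < A →
        Tendsto (fun n => dist (z n) p / r n) atTop (𝓝 A) →
        ∃ c : ℝ, 0 < c ∧ ∃ φ : ℕ → ℕ, StrictMono φ ∧
          NormalScaling p (fun k => c * r (φ k)) := by
      intro z A hApos hz
      obtain ⟨φ, hsm, hanti⟩ := antitone_subseq_of_tendsto_zero' r hr.2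
        (Eventually.of_forall hr.1)
      refine ⟨A, hApos, φ, hsm, ?_, ?_, ?_⟩
      · constructor
        · exact fun k => mul_pos hApos (hr.1 _)
        · have := (hr.2.comp hsm.tendsto_atTop).const_mul A
          simpa using this
      · refine Eventually.of_forall (fun k => ?_)
        exact mul_le_mul_of_nonneg_left (hanti (Nat.le_succ k)) hApos.le
      · refine ⟨fun k => z (φ k), ?_⟩
        have h1 : Tendsto (fun k => dist (z (φ k)) p / r (φ k)) atTop (𝓝 A) :=
          hz.comp hsm.tendsto_atTop
        have h2 := h1.mul (tendsto_const_nhds (x := A⁻¹))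
        rw [mul_inv_cancel₀ hApos.ne'] at h2
        refine h2.congr (fun k => ?_)
        show dist (z (φ k)) p / r (φ k) * A⁻¹ = dist (z (φ k)) p / (A * r (φ k))
        field_simp
    rcases lt_or_ge 0 A with hApos | hAle
    · exact key x A hApos hA
    · have hBpos : 0 < B := by
        have : A = 0 := le_antisymm hAle hA0
        subst this
        linarith
      exact key y B hBpos hB
  · -- (i2)
    intro r x hr hx
    obtain ⟨h0, hpos⟩ := tendsto_zero_and_evpos r (fun n => dist (x n) p) hr
      (fun n => dist_nonneg) hx
    exact antitone_subseq_of_tendsto_zero' _ h0 hpos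
  · -- (i3)
    intro r hr
    obtain ⟨hsc, hdecr, z, hz⟩ := hr
    set s : ℕ → ℝ := fun n => dist (z n) p with hs_def
    obtain ⟨hs0, hspos⟩ := tendsto_zero_and_evpos r s hsc (fun n => dist_nonneg) hz
    obtain ⟨N1, hN1⟩ := eventually_atTop.1 hspos
    obtain ⟨N2, hN2⟩ := eventually_atTop.1 hdecr
    set N0 : ℕ := max N1 N2 with hN0_def
    have hr_anti : ∀ a b, N2 ≤ a → a ≤ b → r b ≤ r a := by
      intro a b ha hab
      induction b, hab using Nat.le_induction with
      | base => exact le_refl _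
      | succ b hb ih => exact le_trans (hN2 b (le_trans ha hb)) ih
    set m : ℕ → ℕ := fun n => minIdx s N0 n with hm_def
    -- s (m j) → 0
    have hsN0 : Tendsto (fun j => s (N0 + j)) atTop (𝓝 (0:ℝ)) := by
      have := hs0.comp (tendsto_add_atTop_nat N0)
      simpa [Function.comp_def, add_comm] using this
    have hsm0 : Tendsto (fun j => s (m j)) atTop (𝓝 (0:ℝ)) := by
      refine squeeze_zero (fun j => dist_nonneg) (fun j => ?_) hsN0
      exact s_minIdx_min s N0 j (N0 + j) (Nat.le_add_right _ _) (le_refl _)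
    -- m → atTop
    have hm_top : Tendsto m atTop atTop := by
      rw [tendsto_atTop]
      intro K
      set K' : ℕ := max K N0 with hK'
      have hne : (Finset.Icc N0 K').Nonempty := by
        refine ⟨N0, ?_⟩
        simp [hK', Finset.mem_Icc]
      set c : ℝ := (Finset.Icc N0 K').inf' hne s with hc
      have hcpos : 0 < c := by
        rw [hc, Finset.lt_inf'_iff]
        intro j hj
        rw [Finset.mem_Icc] at hj
        exact hN1 j (le_trans (le_max_left _ _) hj.1)
      have hev : ∀ᶠ j in atTop, s (m j) < c := hsm0.eventually_lt_const hcpos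
      refine hev.mono (fun j hj => ?_)
      by_contra hcon
      push_neg at hcon
      have hmem : m j ∈ Finset.Icc N0 K' := by
        rw [Finset.mem_Icc]
        exact ⟨minIdx_ge s N0 j, le_trans hcon.le (le_max_left _ _)⟩
      exact absurd (Finset.inf'_le s hmem) (not_le.mpr hj)
    have hsub_top : Tendsto (fun n => n - N0) atTop atTop := tendsto_sub_atTop_nat N0
    have hinner : Tendsto (fun n => m (n - N0)) atTop atTop := hm_top.comp hsub_top
    refine ⟨fun n => z (m (n - N0)), ?_, ?_⟩
    · -- the limit
      have hLo : Tendsto (fun n => s (m (n - N0)) / r (m (n - N0))) atTop (𝓝 (1:ℝ)) :=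
        hz.comp hinner
      refine tendsto_of_tendsto_of_tendsto_of_le_of_le' hLo hz ?_ ?_
      · -- lower bound, eventually
        filter_upwards [eventually_ge_atTop N0] with n hn
        have hk1 : N0 ≤ m (n - N0) := minIdx_ge s N0 _
        have hk2 : m (n - N0) ≤ n := by
          simp only [hm_def]
          have := minIdx_le s N0 (n - N0)
          omega
        have hrk : r n ≤ r (m (n - N0)) :=
          hr_anti _ _ (le_trans (le_max_right N1 N2) hk1) hk2
        exact div_le_div_of_nonneg_left dist_nonneg (hsc.1 n) hrk
      · -- upper bound, eventually
        filter_upwards [eventually_ge_atTop N0] with n hn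
        have hsmn : s (m (n - N0)) ≤ s n :=
          s_minIdx_min s N0 (n - N0) n hn (by omega)
        gcongr
        exact (hsc.1 n).le
    · -- eventually decreasing
      filter_upwards [eventually_ge_atTop N0] with n hn
      exact s_minIdx_anti s N0 (Nat.sub_le_sub_right (Nat.le_succ n) N0)
end

section
/- Let (X,d,p) be a pointed metric space and let E = S_p(X), regarded as a pointed metric space with the metric induced from ℝ and marked point 0. Then R*_n(E,0) = R*_n(X,p). -/
open Filter Topology Set
open scoped ENNReal

lemma dist_spset {X : Type*} [MetricSpace X] (p : X) (y : SpSet X p) :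
    dist y (⟨0, ⟨p, (dist_self p).symm⟩⟩ : SpSet X p) = (y : ℝ) := by
  rw [Subtype.dist_eq, Real.dist_eq]
  simp only [sub_zero]
  obtain ⟨x, hx⟩ := y.2
  rw [abs_of_nonneg]
  rw [hx]; exact dist_nonneg

/-- `R*_n(E,0) = R*_n(X,p)` for `E = S_p(X)` with the metric induced
from `ℝ` and marked point `0`. -/
theorem stmt_8 {X : Type*} [MetricSpace X] (p : X) :
    RstarN (SpSet X p) (⟨0, ⟨p, (dist_self p).symm⟩⟩ : SpSet X p) = RstarN X p := by
  unfold RstarN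
  congr 1
  ext v
  simp only [mem_setOf_eq]
  constructor
  · rintro ⟨r, y, L, ⟨hs, hd, w, hw⟩, hT, rfl⟩
    choose x hx using fun n => (y n).2
    choose wx hwx using fun n => (w n).2
    refine ⟨r, x, L, ⟨hs, hd, wx, ?_⟩, ?_, rfl⟩
    · convert hw using 2 with n
      rw [dist_spset, hwx]
    · convert hT using 2 with n
      rw [dist_spset, hx]
  · rintro ⟨r, x, L, ⟨hs, hd, w, hw⟩, hT, rfl⟩
    refine ⟨r, fun n => ⟨dist (x n) p, ⟨x n, rfl⟩⟩, L,
      ⟨hs, hd, fun n => ⟨dist (w n) p, ⟨w n, rfl⟩⟩, ?_⟩, ?_, rfl⟩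
    · convert hw using 2 with n
      rw [dist_spset]
    · convert hT using 2 with n
      rw [dist_spset]
end

section
/- Let E ⊆ [0,∞) with 0 ∈ E be such that 0 is an accumulation point of E, and regard E as a pointed metric space with the metric induced from ℝ and marked point 0. If R*_n(E,0) < ∞, then E is completely strongly porous at 0. -/
open Filter Topology Set
open scoped ENNReal

lemma gap_of_band (E : Set ℝ) {t L₁ L₂ e₀ : ℝ}
    (ht0 : 0 < t) (htE : t ∈ E) (htL : t < L₁) (hL : L₁ < L₂)
    (he : L₂ < e₀) (heE : e₀ ∈ E) (hband : E ∩ Icc L₁ L₂ = ∅) :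
    ∃ a b : ℝ, IsCompExt E a b ∧ t ≤ a ∧ a ≤ L₁ ∧ L₂ ≤ b := by
  set G := interior (Ici 0 \ E) with hG
  have hGband : Ioo L₁ L₂ ⊆ G := by
    apply interior_maximal _ isOpen_Ioo
    intro x hx
    refine ⟨le_of_lt (lt_trans (lt_of_le_of_lt ht0.le htL) hx.1), fun hxE => ?_⟩
    have : x ∈ E ∩ Icc L₁ L₂ := ⟨hxE, hx.1.le, hx.2.le⟩
    rw [hband] at this
    exact this
  have hGdisj : ∀ x ∈ G, x ∉ E := fun x hx => (interior_subset hx).2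
  set A := {s : ℝ | Ioo s L₂ ⊆ G} with hA
  set B := {u : ℝ | Ioo L₁ u ⊆ G} with hB
  have hL₁A : L₁ ∈ A := hGband
  have hL₂B : L₂ ∈ B := hGband
  have hAlb : ∀ s ∈ A, t ≤ s := by
    intro s hs; by_contra hlt; push_neg at hlt
    exact hGdisj t (hs ⟨hlt, lt_trans htL hL⟩) htE
  have hBub : ∀ u ∈ B, u ≤ e₀ := by
    intro u hu; by_contra hlt; push_neg at hlt
    exact hGdisj e₀ (hu ⟨lt_trans hL he, hlt⟩) heE
  have hAne : A.Nonempty := ⟨L₁, hL₁A⟩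
  have hAbdd : BddBelow A := ⟨t, hAlb⟩
  have hBne : B.Nonempty := ⟨L₂, hL₂B⟩
  have hBbdd : BddAbove B := ⟨e₀, hBub⟩
  have hta : t ≤ sInf A := le_csInf hAne hAlb
  have haL₁ : sInf A ≤ L₁ := csInf_le hAbdd hL₁A
  have hL₂b : L₂ ≤ sSup B := le_csSup hBbdd hL₂B
  have hab : sInf A < sSup B := lt_of_le_of_lt haL₁ (lt_of_lt_of_le hL hL₂b)
  have hsub : Ioo (sInf A) (sSup B) ⊆ G := by
    intro x hx
    rcases le_or_gt x L₁ with hxL | hxL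
    · obtain ⟨s, hsA, hsx⟩ := exists_lt_of_csInf_lt hAne hx.1
      exact hsA ⟨hsx, lt_of_le_of_lt hxL hL⟩
    · obtain ⟨u, huB, hxu⟩ := exists_lt_of_lt_csSup hBne hx.2
      exact huB ⟨hxL, hxu⟩
  refine ⟨sInf A, sSup B, ⟨hab, hsub, ?_⟩, hta, haL₁, hL₂b⟩
  intro a' b' ha' hb' hsub'
  have ha'A : a' ∈ A := fun x hx => hsub' ⟨hx.1, lt_of_lt_of_le hx.2 (le_trans hL₂b hb')⟩
  have hb'B : b' ∈ B := fun x hx => hsub' ⟨lt_of_le_of_lt (le_trans ha' haL₁) hx.1, hx.2⟩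
  exact ⟨le_antisymm ha' (csInf_le hAbdd ha'A), le_antisymm (le_csSup hBbdd hb'B) hb'⟩

lemma asymp_of_eventually_s9 {x y : ℕ → ℝ} (hx : ∀ n, 0 < x n) (hy : ∀ n, 0 < y n)
    {c₁ c₂ : ℝ} (hc₁ : 0 < c₁) (hc₂ : 0 < c₂)
    (h : ∀ᶠ n in atTop, c₁ * x n < y n ∧ y n < c₂ * x n) : Asymp x y := by
  obtain ⟨N, hN⟩ := eventually_atTop.mp h
  set F₁ : Finset ℝ := insert c₁ ((Finset.range N).image (fun n => y n / (2 * x n))) with hF₁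
  set F₂ : Finset ℝ := insert c₂ ((Finset.range N).image (fun n => 2 * y n / x n)) with hF₂
  have hne₁ : F₁.Nonempty := Finset.insert_nonempty _ _
  have hne₂ : F₂.Nonempty := Finset.insert_nonempty _ _
  refine ⟨F₁.inf' hne₁ id, F₂.sup' hne₂ id, ?_, ?_, ?_⟩
  · rw [Finset.lt_inf'_iff]
    intro s hs
    rcases Finset.mem_insert.mp hs with rfl | hs
    · exact hc₁
    · obtain ⟨n, _, rfl⟩ := Finset.mem_image.mp hs
      exact div_pos (hy n) (by have := hx n; linarith)
  · exact lt_of_lt_of_le hc₂ (Finset.le_sup' id (Finset.mem_insert_self _ _))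
  · intro n
    rcases lt_or_ge n N with hn | hn
    · have hm₁ : (y n / (2 * x n)) ∈ F₁ :=
        Finset.mem_insert_of_mem (Finset.mem_image_of_mem _ (Finset.mem_range.mpr hn))
      have hm₂ : (2 * y n / x n) ∈ F₂ :=
        Finset.mem_insert_of_mem (Finset.mem_image_of_mem _ (Finset.mem_range.mpr hn))
      have hd₁ : F₁.inf' hne₁ id ≤ y n / (2 * x n) := Finset.inf'_le id hm₁
      have hd₂ : 2 * y n / x n ≤ F₂.sup' hne₂ id := Finset.le_sup' id hm₂
      have h1 : (F₁.inf' hne₁ id) * (2 * x n) ≤ y n := by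
        rw [← le_div_iff₀ (by have := hx n; linarith : (0:ℝ) < 2 * x n)]; exact hd₁
      have h2 : 2 * y n ≤ (F₂.sup' hne₂ id) * x n := by
        rw [← div_le_iff₀ (hx n)]; exact hd₂
      constructor
      · nlinarith [hy n, hx n]
      · nlinarith [hy n, hx n]
    · obtain ⟨h1, h2⟩ := hN n hn
      have hd₁ : F₁.inf' hne₁ id ≤ c₁ := Finset.inf'_le id (Finset.mem_insert_self _ _)
      have hd₂ : c₂ ≤ F₂.sup' hne₂ id := Finset.le_sup' id (Finset.mem_insert_self _ _)
      constructor
      · exact lt_of_le_of_lt (mul_le_mul_of_nonneg_right hd₁ (hx n).le) h1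
      · exact lt_of_lt_of_le h2 (mul_le_mul_of_nonneg_right hd₂ (hx n).le)

/-- If `0 ∈ E` is an accumulation point of `E ⊆ [0,∞)` and
`R*_n(E,0) < ∞`, then `E` is completely strongly porous at `0`. -/
theorem stmt_9 (E : Set ℝ) (hE : E ⊆ Ici 0) (h0 : (0 : ℝ) ∈ E)
    (hacc : AccPt (0 : ℝ) (Filter.principal E))
    (hfin : RstarN E (⟨0, h0⟩ : E) < ⊤) :
    CSP E := by
  intro τ hτ
  obtain ⟨hτdec, hτmem, hτ0⟩ := hτ
  set p : E := ⟨0, h0⟩ with hp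
  have hτpos : ∀ n, 0 < τ n := fun n =>
    lt_of_le_of_ne (hE (hτmem n).1) (Ne.symm (hτmem n).2)
  set K : ℝ := max 1 (RstarN E p).toReal with hK
  have hK1 : (1:ℝ) ≤ K := le_max_left _ _
  -- the boundedness constraint
  have hbound : ∀ (r : ℕ → ℝ) (x : ℕ → E) (L : ℝ),
      NormalScaling p r → Tendsto (fun n => dist (x n) p / r n) atTop (𝓝 L) → L ≤ K := by
    intro r x L hr hx
    have hle : ENNReal.ofReal L ≤ RstarN E p := by
      rw [RstarN]
      exact le_sSup ⟨r, x, L, hr, hx, rfl⟩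
    rcases le_or_gt L 0 with h | h
    · linarith
    · have h2 := ENNReal.toReal_mono hfin.ne hle
      rw [ENNReal.toReal_ofReal h.le] at h2
      exact le_trans h2 (le_max_right _ _)
  -- antitone tail of τ
  obtain ⟨N₀, hN₀⟩ := eventually_atTop.mp hτdec
  have hmono : ∀ m n, N₀ ≤ m → m ≤ n → τ n ≤ τ m := by
    intro m n hm hmn
    induction n, hmn using Nat.le_induction with
    | base => exact le_refl _
    | succ n hmn ih => exact le_trans (hN₀ n (le_trans hm hmn)) ih
  -- distance computation in the subtype
  have hdist : ∀ (v : ℝ) (hv : v ∈ E), dist (⟨v, hv⟩ : E) p = v := by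
    intro v hv
    rw [Subtype.dist_eq]
    show dist v 0 = v
    rw [Real.dist_eq, sub_zero, abs_of_nonneg (hE hv)]
  -- key claim: bands above (K+1)τ n are eventually empty
  have hband : ∀ M : ℝ, 2 ≤ M →
      ∀ᶠ n in atTop, E ∩ Icc ((K+1) * τ n) (M * ((K+1) * τ n)) = ∅ := by
    intro M hM
    by_contra hcon
    rw [Filter.not_eventually] at hcon
    have hfreq : ∃ᶠ n in atTop, (E ∩ Icc ((K+1)*τ n) (M*((K+1)*τ n))).Nonempty :=
      hcon.mono (fun n hn => Set.nonempty_iff_ne_empty.mpr hn)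
    obtain ⟨σ, hσmono, hσ⟩ := Filter.extraction_of_frequently_atTop hfreq
    choose y hy using hσ
    have hu : ∀ k, y k / τ (σ k) ∈ Icc (K+1) (M*(K+1)) := by
      intro k
      have h1 : (K+1) * τ (σ k) ≤ y k := (hy k).2.1
      have h2 : y k ≤ M * ((K+1) * τ (σ k)) := (hy k).2.2
      have hps := hτpos (σ k)
      constructor
      · rw [le_div_iff₀ hps]; linarith
      · rw [div_le_iff₀ hps]; nlinarith
    obtain ⟨L, hLmem, φ, hφmono, hconv⟩ :=
      tendsto_subseq_of_bounded (Metric.isBounded_Icc (K+1) (M*(K+1))) hu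
    rw [IsClosed.closure_eq isClosed_Icc] at hLmem
    set r : ℕ → ℝ := fun k => τ (σ (φ k)) with hr
    have hsm : StrictMono (fun k => σ (φ k)) := hσmono.comp hφmono
    have hrpos : ∀ k, 0 < r k := fun k => hτpos _
    have hrt : Tendsto r atTop (𝓝 0) := hτ0.comp hsm.tendsto_atTop
    have hrdec : EvDecr r := by
      rw [EvDecr, eventually_atTop]
      refine ⟨N₀, fun k hk => ?_⟩
      exact hmono (σ (φ k)) (σ (φ (k+1))) (le_trans hk hsm.le_apply)
        (hsm.monotone (Nat.le_succ k))
    have hns : NormalScaling p r := by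
      refine ⟨⟨hrpos, hrt⟩, hrdec, ⟨fun k => ⟨τ (σ (φ k)), (hτmem _).1⟩, ?_⟩⟩
      have heq : ∀ k, dist ((⟨τ (σ (φ k)), (hτmem _).1⟩ : E)) p / r k = 1 := by
        intro k
        rw [hdist]
        exact div_self (ne_of_gt (hτpos _))
      exact Tendsto.congr (fun k => (heq k).symm) tendsto_const_nhds
    have hxconv : Tendsto
        (fun k => dist ((⟨y (φ k), (hy (φ k)).1⟩ : E)) p / r k) atTop (𝓝 L) := by
      refine hconv.congr (fun k => ?_)
      show y (φ k) / τ (σ (φ k)) = _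
      rw [hdist]
    have hLK := hbound r _ L hns hxconv
    have hL1 : K + 1 ≤ L := hLmem.1
    linarith
  -- gaps with ratio ≥ m+2 exist with left end in [τ n, (K+1) τ n], eventually
  have hgapP : ∀ m : ℕ, ∀ᶠ n in atTop, ∃ a b : ℝ,
      IsCompExt E a b ∧ τ n ≤ a ∧ a ≤ (K+1) * τ n ∧ ((m:ℝ)+2) * a ≤ b := by
    intro m
    have hM2 : (2:ℝ) ≤ (m:ℝ)+2 := by
      have : (0:ℝ) ≤ (m:ℝ) := Nat.cast_nonneg m
      linarith
    have hb := hband ((m:ℝ)+2) hM2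
    have hτ00 : (0:ℝ) < τ 0 := hτpos 0
    have hlim : Tendsto (fun n => ((m:ℝ)+2) * ((K+1) * τ n)) atTop (𝓝 0) := by
      have := (tendsto_const_nhds (x := ((m:ℝ)+2) * (K+1))).mul hτ0
      simp only [mul_zero] at this
      refine this.congr (fun n => by ring)
    have hsmall : ∀ᶠ n in atTop, ((m:ℝ)+2) * ((K+1) * τ n) < τ 0 :=
      hlim.eventually_lt_const hτ00
    filter_upwards [hb, hsmall] with n h1 h2
    have hpn := hτpos n
    have h3 : τ n < (K+1) * τ n := by nlinarith
    have h4 : (K+1)*τ n < ((m:ℝ)+2) * ((K+1)*τ n) := by nlinarith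
    obtain ⟨a, b, hC, h5, h6, h7⟩ :=
      gap_of_band E (hτpos n) (hτmem n).1 h3 h4 h2 (hτmem 0).1 h1
    refine ⟨a, b, hC, h5, h6, ?_⟩
    nlinarith
  -- diagonalization
  choose N hN using fun m => eventually_atTop.mp (hgapP m)
  set Nc : ℕ → ℕ := fun m => m + (Finset.range (m+1)).sup N with hNc
  have hNNc : ∀ m, N m ≤ Nc m := fun m =>
    le_add_left (Finset.le_sup (Finset.mem_range.mpr (Nat.lt_succ_self m)))
  have hNcmono : Monotone Nc := by
    intro i j hij
    exact add_le_add hij (Finset.sup_mono (Finset.range_subset_range.mpr (Nat.succ_le_succ hij)))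
  set μ : ℕ → ℕ := fun n => Nat.findGreatest (fun m => Nc m ≤ n) n with hμ
  have hμ1 : ∀ n, Nc 0 ≤ n → Nc (μ n) ≤ n := by
    intro n hn
    exact Nat.findGreatest_spec (P := fun m => Nc m ≤ n) (Nat.zero_le n) hn
  have hμ2 : Tendsto μ atTop atTop := by
    rw [tendsto_atTop_atTop]
    intro m
    refine ⟨max m (Nc m), fun n hn => ?_⟩
    exact Nat.le_findGreatest (le_trans (le_max_left _ _) hn)
      (le_trans (le_max_right _ _) hn)
  have hgapsel : ∀ n, Nc 0 ≤ n → ∃ ab : ℝ × ℝ, IsCompExt E ab.1 ab.2 ∧ τ n ≤ ab.1 ∧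
      ab.1 ≤ (K+1)*τ n ∧ ((μ n : ℝ)+2) * ab.1 ≤ ab.2 := by
    intro n hn
    obtain ⟨a, b, h⟩ := hN (μ n) n (le_trans (hNNc (μ n)) (hμ1 n hn))
    exact ⟨(a, b), h⟩
  set ab : ℕ → ℝ × ℝ := fun n =>
    if h : Nc 0 ≤ n then Classical.choose (hgapsel n h) else (1, 2) with habdef
  set a : ℕ → ℝ := fun n => (ab n).1 with hadef
  set b : ℕ → ℝ := fun n => (ab n).2 with hbdef
  have hab : ∀ n, Nc 0 ≤ n → IsCompExt E (a n) (b n) ∧ τ n ≤ a n ∧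
      a n ≤ (K+1)*τ n ∧ ((μ n:ℝ)+2) * a n ≤ b n := by
    intro n hn
    simp only [hadef, hbdef, habdef, dif_pos hn]
    exact Classical.choose_spec (hgapsel n hn)
  -- monotonization
  set N₁ : ℕ := max N₀ (Nc 0) with hN₁
  set idx : ℕ → ℕ := fun n =>
    Nat.rec N₁ (fun m ih => if N₁ ≤ m + 1 ∧ a (m+1) < a ih then m+1 else ih) n with hidxdef
  have hidx0 : idx 0 = N₁ := rfl
  have hidxsucc : ∀ n, idx (n+1) =
      if N₁ ≤ n + 1 ∧ a (n+1) < a (idx n) then n+1 else idx n := fun n => rfl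
  have hidx_lb : ∀ n, N₁ ≤ idx n := by
    intro n
    induction n with
    | zero => exact le_refl _
    | succ n ih =>
      rw [hidxsucc]
      split
      · next h => exact h.1
      · exact ih
  have hidx_ub : ∀ n, idx n ≤ max n N₁ := by
    intro n
    induction n with
    | zero => simp [hidx0]
    | succ n ih =>
      rw [hidxsucc]
      split
      · exact le_max_left _ _
      · exact le_trans ih (max_le_max (Nat.le_succ n) (le_refl _))
  have hidx_mono : Monotone idx := by
    apply monotone_nat_of_le_succ
    intro n
    rw [hidxsucc]
    split
    · next h => exact le_trans (hidx_ub n) (max_le (Nat.le_succ n) h.1)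
    · exact le_refl _
  have ha_dec : ∀ n, a (idx (n+1)) ≤ a (idx n) := by
    intro n
    rw [hidxsucc]
    split
    · next h => exact h.2.le
    · exact le_refl _
  have ha_min : ∀ n, N₁ ≤ n → a (idx n) ≤ a n := by
    intro n hn
    cases n with
    | zero =>
      have : N₁ = 0 := Nat.le_zero.mp hn
      simp [hidx0, this]
    | succ m =>
      rw [hidxsucc]
      split
      · exact le_refl _
      · next h =>
        push_neg at h
        exact h hn
  have hidx_tendsto : Tendsto idx atTop atTop := by
    rw [tendsto_atTop_atTop]
    intro B
    by_contra hcon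
    push_neg at hcon
    have hall : ∀ n, idx n < B := by
      intro n
      obtain ⟨m, hm, hmB⟩ := hcon n
      exact lt_of_le_of_lt (hidx_mono hm) hmB
    have hBpos : 0 < B := lt_of_le_of_lt (Nat.zero_le _) (hall 0)
    have hrne : (Finset.range B).Nonempty := ⟨0, Finset.mem_range.mpr hBpos⟩
    set c : ℝ := (Finset.range B).inf' hrne τ with hc
    have hcpos : 0 < c := by
      rw [hc, Finset.lt_inf'_iff]
      intro i _
      exact hτpos i
    have hclow : ∀ n, c ≤ τ (idx n) := fun n =>
      Finset.inf'_le τ (Finset.mem_range.mpr (hall n))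
    have hlim : Tendsto (fun n => (K+1) * τ n) atTop (𝓝 0) := by
      have := (tendsto_const_nhds (x := K+1)).mul hτ0
      simpa using this
    obtain ⟨n, hn1, hn2⟩ := ((hlim.eventually_lt_const hcpos).and (eventually_ge_atTop N₁)).exists
    have hidxNc : Nc 0 ≤ idx n := le_trans (le_max_right _ _) (hidx_lb n)
    have h1 : c ≤ a (idx n) := le_trans (hclow n) (hab (idx n) hidxNc).2.1
    have h2 : a (idx n) ≤ a n := ha_min n hn2
    have h3 : a n ≤ (K+1) * τ n := (hab n (le_trans (le_max_right _ _) hn2)).2.2.1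
    linarith
  -- the final sequences
  set A : ℕ → ℝ := fun n => a (idx n) with hA
  set Bb : ℕ → ℝ := fun n => b (idx n) with hBb
  have hidxNc : ∀ n, Nc 0 ≤ idx n := fun n => le_trans (le_max_right _ _) (hidx_lb n)
  have hcomp : ∀ n, IsCompExt E (A n) (Bb n) := fun n => (hab (idx n) (hidxNc n)).1
  have hApos : ∀ n, 0 < A n := fun n =>
    lt_of_lt_of_le (hτpos (idx n)) (hab (idx n) (hidxNc n)).2.1
  have hAub : ∀ n, N₁ ≤ n → A n ≤ (K+1) * τ n := fun n hn =>
    le_trans (ha_min n hn) (hab n (le_trans (le_max_right _ _) hn)).2.2.1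
  have hAlb : ∀ n, N₁ ≤ n → τ n ≤ A n := by
    intro n hn
    have hidxn : idx n ≤ n := le_trans (hidx_ub n) (max_le (le_refl n) hn)
    have hτle : τ n ≤ τ (idx n) :=
      hmono (idx n) n (le_trans (le_max_left _ _) (hidx_lb n)) hidxn
    exact le_trans hτle (hab (idx n) (hidxNc n)).2.1
  have hratio : ∀ n, ((μ (idx n):ℝ)+2) * A n ≤ Bb n := fun n =>
    (hab (idx n) (hidxNc n)).2.2.2
  have hBpos : ∀ n, 0 < Bb n := by
    intro n
    have := hratio n
    have h2 : (2:ℝ) ≤ (μ (idx n):ℝ) + 2 := by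
      have : (0:ℝ) ≤ (μ (idx n):ℝ) := Nat.cast_nonneg _
      linarith
    nlinarith [hApos n]
  have hKτlim : Tendsto (fun n => (K+1) * τ n) atTop (𝓝 0) := by
    have := (tendsto_const_nhds (x := K+1)).mul hτ0
    simpa using this
  have hAtend : Tendsto A atTop (𝓝 0) := by
    apply squeeze_zero' (Eventually.of_forall (fun n => (hApos n).le))
    · filter_upwards [eventually_ge_atTop N₁] with n hn
      exact le_trans (ha_min n hn) ((hab n (le_trans (le_max_right _ _) hn)).2.2.1)
    · exact hKτlim
  have hμtend : Tendsto (fun n => ((μ (idx n) : ℝ) + 2)⁻¹) atTop (𝓝 0) := by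
    apply tendsto_inv_atTop_zero.comp
    apply tendsto_atTop_add_const_right atTop (2:ℝ)
    exact tendsto_natCast_atTop_atTop.comp (hμ2.comp hidx_tendsto)
  have hdiv : Tendsto (fun n => A n / Bb n) atTop (𝓝 0) := by
    apply squeeze_zero' (Eventually.of_forall (fun n => (div_pos (hApos n) (hBpos n)).le)) _ hμtend
    refine Eventually.of_forall (fun n => ?_)
    have h := hratio n
    have hpos : (0:ℝ) < (μ (idx n):ℝ) + 2 := by positivity
    rw [div_le_iff₀ (hBpos n), inv_mul_eq_div, le_div_iff₀ hpos]
    calc A n * ((μ (idx n):ℝ)+2) = ((μ (idx n):ℝ)+2) * A n := mul_comm _ _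
      _ ≤ Bb n := h
  have hrel : Tendsto (fun n => (Bb n - A n) / Bb n) atTop (𝓝 1) := by
    have h1 : ∀ n, (Bb n - A n) / Bb n = 1 - A n / Bb n := by
      intro n
      rw [sub_div, div_self (ne_of_gt (hBpos n))]
    have h2 := (tendsto_const_nhds (x := (1:ℝ))).sub hdiv
    rw [sub_zero] at h2
    exact h2.congr (fun n => (h1 n).symm)
  have hdecA : EvDecr A := Eventually.of_forall ha_dec
  have hasymp : Asymp τ A := by
    apply asymp_of_eventually_s9 hτpos hApos (c₁ := 1/2) (c₂ := K+2) (by norm_num) (by linarith)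
    filter_upwards [eventually_ge_atTop N₁] with n hn
    constructor
    · have h1 := hAlb n hn
      have h2 := hτpos n
      linarith
    · have h1 := hAub n hn
      have h2 := hτpos n
      nlinarith
  exact ⟨A, Bb, ⟨hcomp, hdecA, hAtend, hrel⟩, hasymp⟩
end
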